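/- arXiv:1407.2032 — 15 statements merged into one kernel-verified Lean document; each statement's English description precedes it below -/
import Mathlib

section
/- Let p be an odd prime and m, k positive integers with 1 ≤ v₂(m) < v₂(k), where v₂ denotes the 2-adic valuation. Then the number of pairs (x,y) ∈ F_{p^m}² satisfying both x² + y² = 0 and x^{p^k+1} + y^{p^k+1} = 0 equals 2p^m − 1. -/
theorem stmt_0 (p m k : ℕ) (hp : p.Prime) (hpo : Odd p) (hm : 0 < m) (hk : 0 < k)
    (hv1 : 1 ≤ padicValNat 2 m) (hv2 : padicValNat 2 m < padicValNat 2 k)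
    (F : Type*) [Field F] [Fintype F] (hF : Fintype.card F = p ^ m) :
    Nat.card {xy : F × F //
        xy.1 ^ 2 + xy.2 ^ 2 = 0 ∧ xy.1 ^ (p ^ k + 1) + xy.2 ^ (p ^ k + 1) = 0} =
      2 * p ^ m - 1 := by
  classical
  haveI : Fact (Nat.Prime 2) := ⟨Nat.prime_two⟩
  obtain ⟨a, ha⟩ := hpo
  have hmdvd : 2 ∣ m := by
    have := (padicValNat_dvd_iff_le (p := 2) (n := 1) (a := m) hm.ne').mpr hv1
    simpa using this
  have hkdvd : 2 ∣ k := by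
    have := (padicValNat_dvd_iff_le (p := 2) (n := 1) (a := k) hk.ne').mpr
      (le_trans hv1 hv2.le)
    simpa using this
  obtain ⟨j, hj⟩ := hmdvd
  have hsqmod : (p ^ 2) % 4 = 1 := by subst ha; ring_nf; omega
  have hcard4 : Fintype.card F % 4 = 1 := by
    rw [hF, hj, pow_mul, Nat.pow_mod, hsqmod, one_pow]; omega
  have hchar : ringChar F ≠ 2 := fun h => by
    have := FiniteField.even_card_iff_char_two.mp h; omega
  have h2 : (2 : F) ≠ 0 := Ring.two_ne_zero hchar
  obtain ⟨i, hi⟩ := (FiniteField.isSquare_neg_one_iff (F := F)).mpr (by omega)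
  have hi2 : i ^ 2 = -1 := by rw [sq]; exact hi.symm
  have hine : i ≠ 0 := by
    intro h; rw [h] at hi2; simp at hi2
  obtain ⟨j', hj'⟩ := hkdvd
  have hpk4 : p ^ k % 4 = 1 := by
    rw [hj', pow_mul, Nat.pow_mod, hsqmod, one_pow]; omega
  obtain ⟨t, ht⟩ : ∃ t, p ^ k + 1 = 4 * t + 2 := ⟨p ^ k / 4, by omega⟩
  have hin : i ^ (p ^ k + 1) = -1 := by
    rw [ht, show 4 * t + 2 = 2 * (2 * t + 1) by ring, pow_mul, hi2,
      Odd.neg_one_pow ⟨t, by ring⟩]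
  have hinneg : (-i) ^ (p ^ k + 1) = -1 := by
    rw [ht, Even.neg_pow ⟨2 * t + 1, by ring⟩, ← ht, hin]
  have key : ∀ xy : F × F,
      (xy.1 ^ 2 + xy.2 ^ 2 = 0 ∧ xy.1 ^ (p ^ k + 1) + xy.2 ^ (p ^ k + 1) = 0) ↔
        (xy.2 = i * xy.1 ∨ xy.2 = -(i * xy.1)) := by
    rintro ⟨x, y⟩
    dsimp only
    constructor
    · rintro ⟨h1, -⟩
      have hfac : (y - i * x) * (y + i * x) = 0 := by
        have h' : (y - i * x) * (y + i * x) = x ^ 2 + y ^ 2 := by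
          linear_combination (-(x ^ 2) : F) * hi2
        rw [h', h1]
      rcases mul_eq_zero.mp hfac with h | h
      · exact Or.inl (by linear_combination h)
      · exact Or.inr (by linear_combination h)
    · rintro (rfl | rfl) <;> constructor
      · linear_combination (x ^ 2 : F) * hi2
      · rw [mul_pow, hin]; ring
      · linear_combination (x ^ 2 : F) * hi2
      · rw [show -(i * x) = (-i) * x by ring, mul_pow, hinneg]; ring
  have hNat : Nat.card F = p ^ m := by rw [Nat.card_eq_fintype_card, hF]
  set A : Set (F × F) := Set.range (fun x : F => (x, i * x)) with hA
  set B : Set (F × F) := Set.range (fun x : F => (x, -(i * x))) with hB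
  have hAmem : ∀ x y : F, (x, y) ∈ A ↔ y = i * x := by
    intro x y
    simp only [hA, Set.mem_range, Prod.mk.injEq]
    constructor
    · rintro ⟨u, rfl, rfl⟩; rfl
    · rintro rfl; exact ⟨x, rfl, rfl⟩
  have hBmem : ∀ x y : F, (x, y) ∈ B ↔ y = -(i * x) := by
    intro x y
    simp only [hB, Set.mem_range, Prod.mk.injEq]
    constructor
    · rintro ⟨u, rfl, rfl⟩; rfl
    · rintro rfl; exact ⟨x, rfl, rfl⟩
  have hAcard : A.ncard = p ^ m := by
    rw [hA, ← Set.image_univ,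
      Set.ncard_image_of_injective _ (fun a b h => congrArg Prod.fst h),
      Set.ncard_univ, hNat]
  have hBcard : B.ncard = p ^ m := by
    rw [hB, ← Set.image_univ,
      Set.ncard_image_of_injective _ (fun a b h => congrArg Prod.fst h),
      Set.ncard_univ, hNat]
  have hU : {xy : F × F | xy.1 ^ 2 + xy.2 ^ 2 = 0 ∧
      xy.1 ^ (p ^ k + 1) + xy.2 ^ (p ^ k + 1) = 0} = A ∪ B := by
    ext ⟨x, y⟩
    rw [Set.mem_setOf_eq, key (x, y), Set.mem_union, hAmem, hBmem]
  have hI : A ∩ B = {((0 : F), (0 : F))} := by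
    ext ⟨x, y⟩
    rw [Set.mem_inter_iff, hAmem, hBmem, Set.mem_singleton_iff, Prod.mk.injEq]
    constructor
    · rintro ⟨rfl, h⟩
      have h2x : (2 : F) * (i * x) = 0 := by linear_combination h
      have hx : x = 0 := by
        rcases mul_eq_zero.mp h2x with h' | h'
        · exact absurd h' h2
        · rcases mul_eq_zero.mp h' with h'' | h''
          · exact absurd h'' hine
          · exact h''
      subst hx; simp
    · rintro ⟨rfl, rfl⟩; simp
  have hcnt := Set.ncard_union_add_ncard_inter A B (Set.toFinite A) (Set.toFinite B)
  rw [hI, Set.ncard_singleton, hAcard, hBcard] at hcnt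
  have hc : Nat.card {xy : F × F //
      xy.1 ^ 2 + xy.2 ^ 2 = 0 ∧ xy.1 ^ (p ^ k + 1) + xy.2 ^ (p ^ k + 1) = 0} =
      Set.ncard {xy : F × F | xy.1 ^ 2 + xy.2 ^ 2 = 0 ∧
        xy.1 ^ (p ^ k + 1) + xy.2 ^ (p ^ k + 1) = 0} :=
    Nat.card_coe_set_eq _
  rw [hc, hU]
  have hp1 : 1 ≤ p ^ m := Nat.one_le_pow _ _ hp.pos
  omega
end

section
/- Let p be an odd prime and m, k positive integers with v₂(k) < v₂(m). If p^k ≡ 3 (mod 4), then the only pair (x,y) ∈ F_{p^m}² satisfying both x² + y² = 0 and x^{p^k+1} + y^{p^k+1} = 0 is (0,0). -/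
theorem stmt_1 (p m k : ℕ) (hp : p.Prime) (hpo : Odd p) (hm : 0 < m) (hk : 0 < k)
    (hv : padicValNat 2 k < padicValNat 2 m) (hmod : p ^ k % 4 = 3)
    (F : Type*) [Field F] [Fintype F] (hF : Fintype.card F = p ^ m) :
    ∀ x y : F, x ^ 2 + y ^ 2 = 0 → x ^ (p ^ k + 1) + y ^ (p ^ k + 1) = 0 →
      x = 0 ∧ y = 0 := by
  intro x y h1 h2
  -- 4 ∣ p^k + 1
  obtain ⟨t, ht⟩ : 4 ∣ p ^ k + 1 := by omega
  have hx2 : x ^ 2 = -y ^ 2 := eq_neg_of_add_eq_zero_left h1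
  have hxy : x ^ (p ^ k + 1) = y ^ (p ^ k + 1) := by
    have h4 : (x ^ 2) ^ (2 * t) = (y ^ 2) ^ (2 * t) := by
      rw [hx2, neg_pow, Even.neg_one_pow (even_two_mul t), one_mul]
    rw [ht, show 4 * t = 2 * (2 * t) by ring, pow_mul, h4, ← pow_mul]
  have h2' : (2 : F) * y ^ (p ^ k + 1) = 0 := by
    rw [two_mul]; rw [hxy] at h2; exact h2
  have h2ne : (2 : F) ≠ 0 := by
    intro h20
    haveI : CharP F (ringChar F) := ringChar.charP F
    obtain ⟨n, hq, hcard⟩ := FiniteField.card F (ringChar F)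
    have hdvd : ringChar F ∣ 2 := by
      have : ((2 : ℕ) : F) = 0 := by exact_mod_cast h20
      exact (CharP.cast_eq_zero_iff F (ringChar F) 2).mp this
    have hq2 : ringChar F = 2 := (Nat.prime_dvd_prime_iff_eq hq Nat.prime_two).mp hdvd
    rw [hF, hq2] at hcard
    have hpd : p ∣ 2 ^ (n : ℕ) := hcard ▸ dvd_pow_self p hm.ne'
    have hp2 : p = 2 := (Nat.prime_dvd_prime_iff_eq hp Nat.prime_two).mp
      (hp.dvd_of_dvd_pow hpd)
    rw [Nat.odd_iff] at hpo
    omega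
  have hy : y ^ (p ^ k + 1) = 0 := by
    rcases mul_eq_zero.mp h2' with h | h
    · exact absurd h h2ne
    · exact h
  have hne : p ^ k + 1 ≠ 0 := by positivity
  have hy0 : y = 0 := (pow_eq_zero_iff hne).mp hy
  subst hy0
  have hx0 : x = 0 := by
    have : x ^ 2 = 0 := by simpa using h1
    exact pow_eq_zero_iff two_ne_zero |>.mp this
  exact ⟨hx0, rfl⟩
end

section
/- Let p be an odd prime and m, k positive integers with v₂(k) < v₂(m). If p^k ≡ 1 (mod 4), then the number of pairs (x,y) ∈ F_{p^m}² satisfying both x² + y² = 0 and x^{p^k+1} + y^{p^k+1} = 0 equals 2p^m − 1. -/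
theorem stmt_2 (p m k : ℕ) (hp : p.Prime) (hpo : Odd p) (hm : 0 < m) (hk : 0 < k)
    (hv : padicValNat 2 k < padicValNat 2 m) (hmod : p ^ k % 4 = 1)
    (F : Type*) [Field F] [Fintype F] (hF : Fintype.card F = p ^ m) :
    Nat.card {xy : F × F //
        xy.1 ^ 2 + xy.2 ^ 2 = 0 ∧ xy.1 ^ (p ^ k + 1) + xy.2 ^ (p ^ k + 1) = 0} =
      2 * p ^ m - 1 := by
  have hFact : Fact p.Prime := ⟨hp⟩
  -- p^m % 4 = 1
  have hp4 : p % 4 = 1 ∨ p % 4 = 3 := by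
    have h2 := hpo
    rw [Nat.odd_iff] at h2
    omega
  have hpowmod : ∀ n : ℕ, p ^ n % 4 = (p % 4) ^ n % 4 := fun n => by
    rw [Nat.pow_mod]
  have h3pow : ∀ n : ℕ, 3 ^ n % 4 = if n % 2 = 0 then 1 else 3 := by
    intro n
    induction n with
    | zero => simp
    | succ j ih =>
      rw [pow_succ, Nat.mul_mod, ih]
      rcases Nat.mod_two_eq_zero_or_one j with hj | hj
      · have hj1 : (j + 1) % 2 = 1 := by omega
        rw [if_pos hj, hj1]
        norm_num
      · have hj1 : (j + 1) % 2 = 0 := by omega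
        rw [if_neg (by omega : ¬ j % 2 = 0), hj1]
        norm_num
  have hkm : p % 4 = 3 → k % 2 = 0 ∧ m % 2 = 0 := by
    intro h3
    have hk2 : k % 2 = 0 := by
      by_contra hko
      rw [hpowmod, h3, h3pow] at hmod
      simp [hko] at hmod <;> omega
    have hkd : 2 ∣ k := Nat.dvd_of_mod_eq_zero hk2
    have : 1 ≤ padicValNat 2 k := one_le_padicValNat_of_dvd hk.ne' hkd
    have hmge : 1 ≤ padicValNat 2 m := le_trans this (le_of_lt hv)
    have : (2:ℕ) ∣ m := dvd_of_one_le_padicValNat hmge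
    exact ⟨hk2, Nat.mod_eq_zero_of_dvd this⟩
  have h4 : p ^ m % 4 = 1 := by
    rcases hp4 with h1 | h3
    · rw [hpowmod, h1, one_pow]
      norm_num
    · rw [hpowmod, h3, h3pow, (hkm h3).2]; simp
  -- -1 is a square
  have hsq : IsSquare (-1 : F) := by
    rw [FiniteField.isSquare_neg_one_iff, hF, h4]; omega
  obtain ⟨i, hi⟩ := hsq
  have hi2 : i * i = -1 := hi.symm
  have hi4 : i ^ 4 = 1 := by
    have : i ^ 4 = (i * i) * (i * i) := by ring
    rw [this, hi2]; ring
  have hcharne : ringChar F ≠ 2 := by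
    intro h
    have := FiniteField.even_card_of_char_two h
    rw [hF] at this
    have : Odd (p ^ m) := hpo.pow
    rw [Nat.odd_iff] at this
    omega
  have h2ne : (2 : F) ≠ 0 := Ring.two_ne_zero hcharne
  have hine : i ≠ 0 := by
    intro h
    rw [h, mul_zero] at hi2
    exact one_ne_zero (neg_eq_zero.mp hi2.symm)
  -- i ^ (p^k) = i
  have hipk : i ^ (p ^ k) = i := by
    obtain ⟨q, hq⟩ : ∃ q, p ^ k = 4 * q + 1 := ⟨p ^ k / 4, by omega⟩
    rw [hq, pow_add, pow_mul, hi4, one_pow, pow_one, one_mul]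
  have hin : i ^ (p ^ k + 1) = -1 := by
    rw [pow_succ, hipk, hi2]
  have hnegin : (-i) ^ (p ^ k + 1) = -1 := by
    have heven : Even (p ^ k + 1) := by
      have : Odd (p ^ k) := hpo.pow
      rcases this with ⟨s, hs⟩
      exact ⟨s + 1, by omega⟩
    rw [heven.neg_pow, hin]
  -- reformulate the set
  have hset : ∀ xy : F × F,
      (xy.1 ^ 2 + xy.2 ^ 2 = 0 ∧ xy.1 ^ (p ^ k + 1) + xy.2 ^ (p ^ k + 1) = 0) ↔
      (xy.1 = i * xy.2 ∨ xy.1 = -i * xy.2) := by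
    rintro ⟨x, y⟩
    dsimp only
    constructor
    · rintro ⟨h1, -⟩
      have : (x - i * y) * (x + i * y) = 0 := by
        have : (x - i * y) * (x + i * y) = x ^ 2 - (i * i) * y ^ 2 := by ring
        rw [this, hi2]; linear_combination h1
      rcases mul_eq_zero.mp this with h | h
      · left; linear_combination h
      · right; linear_combination h
    · rintro (h | h) <;> subst h <;> constructor
      · have : (i * y) ^ 2 = (i * i) * y ^ 2 := by ring
        rw [this, hi2]; ring
      · rw [mul_pow, hin]; ring
      · have : (-i * y) ^ 2 = (i * i) * y ^ 2 := by ring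
        rw [this, hi2]; ring
      · rw [mul_pow, hnegin]; ring
  -- counting
  classical
  rw [Nat.card_eq_fintype_card, Fintype.card_subtype]
  have : (Finset.univ.filter fun xy : F × F =>
      xy.1 ^ 2 + xy.2 ^ 2 = 0 ∧ xy.1 ^ (p ^ k + 1) + xy.2 ^ (p ^ k + 1) = 0) =
      Finset.univ.filter (fun xy : F × F => xy.1 = i * xy.2) ∪
      Finset.univ.filter (fun xy : F × F => xy.1 = -i * xy.2) := by
    rw [← Finset.filter_or]
    exact Finset.filter_congr fun xy _ => by rw [hset xy]
  rw [this]
  have hcard : ∀ c : F, (Finset.univ.filter fun xy : F × F => xy.1 = c * xy.2).card =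
      Fintype.card F := by
    intro c
    rw [← Finset.card_univ]
    apply Finset.card_bij' (fun xy _ => xy.2) (fun y _ => (c * y, y))
    · intro xy hxy
      exact Finset.mem_univ _
    · intro y hy
      simp
    · intro xy hxy
      simp only [Finset.mem_filter] at hxy
      exact Prod.ext hxy.2.symm rfl
    · intro y hy; rfl
  have hinter : (Finset.univ.filter (fun xy : F × F => xy.1 = i * xy.2) ∩
      Finset.univ.filter (fun xy : F × F => xy.1 = -i * xy.2)) = {((0 : F), (0 : F))} := by
    ext ⟨x, y⟩
    simp only [Finset.mem_inter, Finset.mem_filter, Finset.mem_univ, true_and,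
      Finset.mem_singleton, Prod.mk.injEq]
    constructor
    · rintro ⟨h1, h2⟩
      have hy : y = 0 := by
        by_contra hyne
        have : i * y = -i * y := h1 ▸ h2 ▸ rfl
        have h2i : (2 : F) * i * y = 0 := by linear_combination this
        rcases mul_eq_zero.mp h2i with h | h
        · rcases mul_eq_zero.mp h with h | h
          · exact h2ne h
          · exact hine h
        · exact hyne h
      subst hy
      simp at h1
      exact ⟨h1, rfl⟩
    · rintro ⟨hx, hy⟩; subst hx; subst hy; simp
  have := Finset.card_union_add_card_inter
    (Finset.univ.filter (fun xy : F × F => xy.1 = i * xy.2))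
    (Finset.univ.filter (fun xy : F × F => xy.1 = -i * xy.2))
  rw [hinter, hcard, hcard, hF, Finset.card_singleton] at this
  omega
end

section
/- Let p be an odd prime, m, k positive integers with d = gcd(m,k) and v₂(k) < v₂(m), and let π be a primitive element of F_{p^m}. Then there is no y ∈ F_{p^m}* with y^{p^k−1} = −π^{(p^k−1)/2}. -/
theorem stmt_4 (p m k : ℕ) (hp : p.Prime) (hpo : Odd p) (hm : 0 < m) (hk : 0 < k)
    (hv : padicValNat 2 k < padicValNat 2 m)
    (F : Type*) [Field F] [Fintype F] (hF : Fintype.card F = p ^ m)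
    (π : Fˣ) (hπ : ∀ x : Fˣ, x ∈ Subgroup.zpowers π) :
    ¬ ∃ y : F, y ≠ 0 ∧ y ^ (p ^ k - 1) = -(π : F) ^ ((p ^ k - 1) / 2) := by
  classical
  rintro ⟨y, hy0, hy⟩
  have hp1 : 1 < p := hp.one_lt
  set d := Nat.gcd m k with hd
  have hdm : d ∣ m := Nat.gcd_dvd_left m k
  have hdk : d ∣ k := Nat.gcd_dvd_right m k
  have hdpos : 0 < d := Nat.gcd_pos_of_pos_left _ hm
  haveI : Fact (Nat.Prime 2) := ⟨Nat.prime_two⟩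
  set t := padicValNat 2 k with ht
  have h1 : 2 ^ (t + 1) ∣ m := dvd_trans (pow_dvd_pow 2 hv) pow_padicValNat_dvd
  have h2 : ¬ 2 ^ (t + 1) ∣ k := pow_succ_padicValNat_not_dvd hk.ne'
  have h3 : 2 ^ t ∣ k := pow_padicValNat_dvd
  have h3m : 2 ^ t ∣ m := dvd_trans (pow_dvd_pow 2 (Nat.le_succ t)) h1
  have htd : 2 ^ t ∣ d := Nat.dvd_gcd h3m h3
  have hkd_odd : Odd (k / d) := by
    rw [← Nat.not_even_iff_odd]
    intro hev
    obtain ⟨s, hs⟩ := hev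
    apply h2
    have hkds : k = (d * s) * 2 := by
      have h' : k = d * (s + s) := by rw [← hs, Nat.mul_div_cancel' hdk]
      rw [h']; ring
    rw [hkds, pow_succ]
    exact mul_dvd_mul (dvd_mul_of_dvd_left htd s) dvd_rfl
  have hmd_even : Even (m / d) := by
    by_contra hodd'
    rw [Nat.not_even_iff_odd] at hodd'
    have hodd : ¬ 2 ∣ (m / d) := by
      rw [Nat.two_dvd_ne_zero]; exact Nat.odd_iff.mp hodd'
    apply h2
    have hcop : Nat.Coprime (2 ^ (t + 1)) (m / d) :=
      Nat.Coprime.pow_left _ ((Nat.prime_two.coprime_iff_not_dvd).mpr hodd)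
    have hmm : m = d * (m / d) := (Nat.mul_div_cancel' hdm).symm
    have : 2 ^ (t + 1) ∣ d * (m / d) := hmm ▸ h1
    exact (hcop.dvd_of_dvd_mul_right this).trans hdk
  -- numeric setup
  set q := p ^ d with hq
  set e := q - 1 with he
  set N := p ^ m - 1 with hN
  set K := p ^ k - 1 with hK
  have hq1 : 1 < q := Nat.one_lt_pow hdpos.ne' hp1
  have hqodd : Odd q := hpo.pow
  have hepos : 0 < e := by omega
  have hpm1 : 1 < p ^ m := Nat.one_lt_pow hm.ne' hp1
  have hpk1 : 1 < p ^ k := Nat.one_lt_pow hk.ne' hp1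
  have hNpos : 0 < N := by omega
  have hNe : 2 ∣ N := by
    have : Even (p ^ m - 1) := Nat.Odd.sub_odd (hpo.pow) odd_one
    exact this.two_dvd
  have hKe : 2 ∣ K := by
    have : Even (p ^ k - 1) := Nat.Odd.sub_odd (hpo.pow) odd_one
    exact this.two_dvd
  have hpk_eq : p ^ k = q ^ (k / d) := by
    rw [hq, ← pow_mul, Nat.mul_div_cancel' hdk]
  have hpm_eq : p ^ m = q ^ (m / d) := by
    rw [hq, ← pow_mul, Nat.mul_div_cancel' hdm]
  have heK : e ∣ K := by
    have h' := Nat.sub_dvd_pow_sub_pow q 1 (k / d)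
    rw [one_pow] at h'
    rw [hK, hpk_eq, he]
    exact h'
  have h2e_q2 : 2 * e ∣ q ^ 2 - 1 := by
    have hq2 : q ^ 2 - 1 = e * (q + 1) := by
      rw [he]
      zify [Nat.one_le_of_lt hq1, Nat.one_le_of_lt (Nat.one_lt_pow two_ne_zero hq1)]
      ring
    rw [hq2]
    obtain ⟨j, hj⟩ := hqodd
    have h2q1 : 2 ∣ q + 1 := by omega
    calc 2 * e = e * 2 := by ring
    _ ∣ e * (q + 1) := mul_dvd_mul_left e h2q1
  have hq2mod : q ^ 2 ≡ 1 [MOD 2 * e] :=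
    ((Nat.modEq_iff_dvd' (Nat.one_le_of_lt (Nat.one_lt_pow two_ne_zero hq1))).mpr h2e_q2).symm
  have h2eN : 2 * e ∣ N := by
    obtain ⟨c, hc⟩ := hmd_even
    have : p ^ m = (q ^ 2) ^ c := by
      rw [hpm_eq, ← pow_mul, hc, ← two_mul, hq, ← pow_mul, ← pow_mul]
    have hdvd := Nat.sub_dvd_pow_sub_pow (q ^ 2) 1 c
    rw [one_pow] at hdvd
    exact dvd_trans h2e_q2 (by rw [hN, this]; exact hdvd)
  have hn2eK : ¬ 2 * e ∣ K := by
    intro hcon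
    obtain ⟨c, hc⟩ := hkd_odd
    have hqn : p ^ k = (q ^ 2) ^ c * q := by
      rw [hpk_eq, hc, pow_add, pow_mul, pow_one]
    have hmod1 : p ^ k ≡ q [MOD 2 * e] := by
      calc p ^ k = (q ^ 2) ^ c * q := hqn
      _ ≡ 1 ^ c * q [MOD 2 * e] := (hq2mod.pow c).mul_right q
      _ = q := by ring
    have hmod2 : p ^ k ≡ 1 [MOD 2 * e] :=
      ((Nat.modEq_iff_dvd' (Nat.one_le_of_lt hpk1)).mpr hcon).symm
    have : q ≡ 1 [MOD 2 * e] := hmod1.symm.trans hmod2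
    have h2ee : 2 * e ∣ e := by
      have := (Nat.modEq_iff_dvd' (Nat.one_le_of_lt hq1)).mp this.symm
      simpa [he] using this
    have := Nat.le_of_dvd hepos h2ee
    omega
  -- group theory
  have horder : orderOf π = N := by
    rw [orderOf_eq_card_of_forall_mem_zpowers hπ, Nat.card_eq_fintype_card,
      Fintype.card_units, hF]
  have hπN : π ^ N = 1 := by rw [← horder]; exact pow_orderOf_eq_one π
  have hhalf : π ^ (N / 2) = -1 := by
    have hsq : ((π ^ (N / 2) : Fˣ) : F) ^ 2 = 1 := by
      rw [← Units.val_pow_eq_pow_val, ← pow_mul, Nat.div_mul_cancel hNe, hπN, Units.val_one]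
    rcases sq_eq_one_iff.mp hsq with h | h
    · exfalso
      have : π ^ (N / 2) = 1 := Units.ext (by simpa using h)
      have hdvd : orderOf π ∣ N / 2 := orderOf_dvd_of_pow_eq_one this
      rw [horder] at hdvd
      have hpos : 0 < N / 2 := by omega
      have := Nat.le_of_dvd hpos hdvd
      omega
    · exact Units.ext (by simpa using h)
  have hvalF : (π : F) ^ (N / 2) = -1 := by
    rw [← Units.val_pow_eq_pow_val, hhalf]; simp
  set u : Fˣ := Units.mk0 y hy0 with hu
  have huK : u ^ K = π ^ (N / 2 + K / 2) := by
    apply Units.ext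
    rw [Units.val_pow_eq_pow_val, Units.val_mk0, hy, Units.val_pow_eq_pow_val, pow_add,
      hvalF, neg_one_mul]
  obtain ⟨a, ha⟩ := Subgroup.mem_zpowers_iff.mp (hπ u)
  have heq : π ^ (a * (K : ℤ)) = π ^ ((N / 2 + K / 2 : ℕ) : ℤ) := by
    rw [zpow_mul, ha, zpow_natCast, zpow_natCast, huK]
  have hdvdZ : (N : ℤ) ∣ a * K - ((N / 2 + K / 2 : ℕ) : ℤ) := by
    have hzero : π ^ (a * (K : ℤ) - ((N / 2 + K / 2 : ℕ) : ℤ)) = 1 := by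
      rw [zpow_sub, heq]; simp
    have h' := orderOf_dvd_iff_zpow_eq_one.mpr hzero
    rwa [horder] at h'
  have heS : (e : ℤ) ∣ ((N / 2 + K / 2 : ℕ) : ℤ) := by
    have hA : (e : ℤ) ∣ a * K := Dvd.dvd.mul_left (Int.natCast_dvd_natCast.mpr heK) a
    have heN : e ∣ N := dvd_trans (dvd_mul_left e 2) h2eN
    have hB : (e : ℤ) ∣ a * K - ((N / 2 + K / 2 : ℕ) : ℤ) :=
      dvd_trans (Int.natCast_dvd_natCast.mpr heN) hdvdZ
    have := dvd_sub hA hB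
    simpa using this
  have heSn : e ∣ N / 2 + K / 2 := Int.natCast_dvd_natCast.mp heS
  have heN2 : e ∣ N / 2 := by
    obtain ⟨c, hc⟩ := h2eN
    refine ⟨c, ?_⟩
    have h' : N = 2 * (e * c) := by rw [hc]; ring
    omega
  have heK2 : e ∣ K / 2 := by
    have := Nat.dvd_sub heSn heN2
    simpa [Nat.add_sub_cancel_left] using this
  obtain ⟨s, hs⟩ := heK2
  exact hn2eK ⟨s, by rw [mul_assoc]; omega⟩
end

section
/- Let p be an odd prime and m, k positive integers with v₂(k) < v₂(m), and let π be a primitive element of F_{p^m}. If p^k ≡ 3 (mod 4), then the only triple (x,y,z) ∈ F_{p^m}³ satisfying both x² + y² − πz² = 0 and x^{p^k+1} + y^{p^k+1} + π^{(p^k+1)/2} z^{p^k+1} = 0 is (0,0,0). -/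
lemma stmt5_key (p k m : ℕ) (hp4 : p % 4 = 3) (hko : Odd k) (hme : Even m) :
    ¬ ((2:ℤ)^(padicValNat 2 (p+1) + 1)) ∣ (p:ℤ)^k + 1 ∧
      ((2:ℤ)^(padicValNat 2 (p+1) + 1)) ∣ (p:ℤ)^m - 1 := by
  haveI : Fact (Nat.Prime 2) := ⟨Nat.prime_two⟩
  set v := padicValNat 2 (p+1) with hv
  have hv2 : (2:ℤ)^v ∣ (p:ℤ) + 1 := by
    exact_mod_cast Int.natCast_dvd_natCast.mpr (pow_padicValNat_dvd (p := 2) (n := p+1))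
  have h2 : (2:ℤ) ∣ (p:ℤ) - 1 := by
    obtain ⟨s, hs⟩ : ∃ s, p = 4*s + 3 := ⟨p/4, by omega⟩
    exact ⟨2*s+1, by rw [hs]; push_cast; ring⟩
  have hVp2 : (2:ℤ)^(v+1) ∣ (p:ℤ)^2 - 1 := by
    have := mul_dvd_mul hv2 h2
    rw [pow_succ]
    exact (dvd_of_eq (by ring)).trans this |>.trans (dvd_of_eq (by ring))
  have hVm : (2:ℤ)^(v+1) ∣ (p:ℤ)^m - 1 := by
    obtain ⟨j, hj⟩ := hme
    have h := sub_dvd_pow_sub_pow ((p:ℤ)^2) 1 j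
    rw [one_pow, ← pow_mul] at h
    refine hVp2.trans ?_
    have : 2 * j = m := by omega
    rwa [this] at h
  refine ⟨?_, hVm⟩
  intro hcon
  have hdiff : (2:ℤ)^(v+1) ∣ (p:ℤ)^k - p := by
    obtain ⟨t, ht⟩ := hko
    have h := sub_dvd_pow_sub_pow ((p:ℤ)^2) 1 t
    rw [one_pow, ← pow_mul] at h
    have : (p:ℤ)^k - p = p * ((p:ℤ)^(2*t) - 1) := by
      rw [ht]; ring
    rw [this]
    exact Dvd.dvd.mul_left (hVp2.trans h) _
  have hfin : (2:ℤ)^(v+1) ∣ (p:ℤ) + 1 := by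
    have : (p:ℤ) + 1 = ((p:ℤ)^k + 1) - ((p:ℤ)^k - p) := by ring
    rw [this]; exact dvd_sub hcon hdiff
  have hnat : (2:ℕ)^(v+1) ∣ p + 1 := by exact_mod_cast hfin
  exact pow_succ_padicValNat_not_dvd (by omega) hnat

theorem stmt_5 (p m k : ℕ) (hp : p.Prime) (hpo : Odd p) (hm : 0 < m) (hk : 0 < k)
    (hv : padicValNat 2 k < padicValNat 2 m) (hmod : p ^ k % 4 = 3)
    (F : Type*) [Field F] [Fintype F] (hF : Fintype.card F = p ^ m)
    (π : Fˣ) (hπ : ∀ x : Fˣ, x ∈ Subgroup.zpowers π) :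
    ∀ x y z : F, x ^ 2 + y ^ 2 - (π : F) * z ^ 2 = 0 →
      x ^ (p ^ k + 1) + y ^ (p ^ k + 1)
        + (π : F) ^ ((p ^ k + 1) / 2) * z ^ (p ^ k + 1) = 0 →
      x = 0 ∧ y = 0 ∧ z = 0 := by
  haveI hpF : Fact p.Prime := ⟨hp⟩
  have hpm2 : p % 2 = 1 := Nat.odd_iff.mp hpo
  have hp42 : p % 4 % 2 = p % 2 := Nat.mod_mod_of_dvd p (by norm_num)
  have hp4 : p % 4 = 3 := by
    rcases (by omega : p % 4 = 1 ∨ p % 4 = 3) with h | h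
    · exfalso
      have : p ^ k % 4 = 1 := by rw [Nat.pow_mod, h, one_pow]; norm_num
      omega
    · exact h
  have hko : Odd k := by
    by_contra hke
    rw [Nat.not_odd_iff_even] at hke
    obtain ⟨t, ht⟩ := hke
    have : p ^ k % 4 = 1 := by
      have h9 : p ^ 2 % 4 = 1 := by rw [Nat.pow_mod, hp4]
      rw [show k = 2 * t by omega, pow_mul, Nat.pow_mod, h9, one_pow]; norm_num
    omega
  have hme : Even m := by
    by_contra hmo
    rw [Nat.not_even_iff_odd] at hmo
    have h1 : padicValNat 2 k = 0 := padicValNat.eq_zero_of_not_dvd (by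
      rintro ⟨t, ht⟩; exact (Nat.not_odd_iff_even.mpr ⟨t, by omega⟩) hko)
    have h2 : padicValNat 2 m = 0 := padicValNat.eq_zero_of_not_dvd (by
      rintro ⟨t, ht⟩; exact (Nat.not_odd_iff_even.mpr ⟨t, by omega⟩) hmo)
    omega
  have hchar : ringChar F = p := by
    have h1 : p ∣ ringChar F := (prime_dvd_char_iff_dvd_card p).mpr
      (hF ▸ dvd_pow_self p hm.ne')
    have h2 : (ringChar F).Prime := CharP.char_is_prime F (ringChar F)
    exact ((Nat.prime_dvd_prime_iff_eq hp h2).mp h1).symm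
  haveI hCF : CharP F p := hchar ▸ ringChar.charP F
  have h2F : (2:F) ≠ 0 := by
    intro h
    have := (CharP.cast_eq_zero_iff F p 2).mp h
    have := Nat.le_of_dvd (by norm_num) this
    omega
  have hcard4 : Fintype.card F % 4 = 1 := by
    rw [hF]
    obtain ⟨j, hj⟩ := hme
    have h9 : p ^ 2 % 4 = 1 := by rw [Nat.pow_mod, hp4]
    rw [show m = 2 * j by omega, pow_mul, Nat.pow_mod, h9, one_pow]; norm_num
  obtain ⟨i, hi⟩ : IsSquare (-1 : F) := FiniteField.isSquare_neg_one_iff.mpr (by omega)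
  set q := p ^ k with hqdef
  have hq1 : 1 ≤ q := Nat.one_le_pow _ _ hp.pos
  have hq4 : q % 4 = 3 := hmod
  have hqodd : Odd q := hpo.pow
  have hi4 : i ^ 4 = 1 := by
    have h' : i ^ 4 = (i*i) * (i*i) := by ring
    rw [h', ← hi]; ring
  have hiq : i ^ q = -i := by
    have hq' : q = 4 * (q / 4) + 3 := by omega
    calc i ^ q = (i^4)^(q/4) * i^3 := by rw [← pow_mul, ← pow_add, ← hq']
    _ = i^3 := by rw [hi4, one_pow, one_mul]
    _ = (i*i) * i := by ring
    _ = -i := by rw [← hi]; ring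
  have hiq1 : i ^ (q+1) = 1 := by
    obtain ⟨s, hs⟩ : 4 ∣ q + 1 := by omega
    rw [hs, pow_mul, hi4, one_pow]
  have hr2 : 2 * ((q+1)/2) = q + 1 := by omega
  set r := (q+1)/2 with hrdef
  have frob : ∀ u w : F, (u + w) ^ q = u ^ q + w ^ q := fun u w => add_pow_char_pow u w p k
  intro x y z h1 h2
  rcases eq_or_ne z 0 with hz | hz
  · -- case z = 0
    subst hz
    rw [zero_pow (two_ne_zero), mul_zero, sub_zero] at h1
    rw [zero_pow (by omega : q + 1 ≠ 0), mul_zero, add_zero] at h2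
    have hfac : (x - i*y) * (x + i*y) = 0 := by linear_combination h1 + y^2 * hi
    have hy : y = 0 := by
      have key : ∀ s : F, x = s * (i * y) → (s^(q+1) = 1) → y = 0 := by
        intro s hx hs
        have hx1 : x ^ (q+1) = y ^ (q+1) := by
          rw [hx, mul_pow, mul_pow, hs, one_mul, hiq1, one_mul]
        rw [hx1, ← two_mul] at h2
        have := (mul_eq_zero.mp h2).resolve_left h2F
        exact pow_eq_zero_iff (by omega) |>.mp this
      rcases mul_eq_zero.mp hfac with h | h
      · exact key 1 (by linear_combination h) (one_pow _)
      · refine key (-1) (by linear_combination h) ?_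
        have he : Even (q+1) := hqodd.add_one
        rw [he.neg_one_pow]
    subst hy
    have hx : x = 0 := by
      have h' : x ^ 2 = 0 := by linear_combination h1
      exact pow_eq_zero_iff two_ne_zero |>.mp h'
    exact ⟨hx, rfl, rfl⟩
  · -- case z ≠ 0
    exfalso
    set a := x + i*y with hadef
    set b := x - i*y with hbdef
    have hab : a * b = (π:F) * z^2 := by
      rw [hadef, hbdef]; linear_combination h1 + y^2 * hi
    have haq : a ^ q = x^q - i*y^q := by
      rw [hadef, frob x (i*y), mul_pow, hiq]; ring
    have hbq : b ^ q = x^q + i*y^q := by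
      have hb' : b = x + (-i)*y := by rw [hbdef]; ring
      rw [hb', frob x ((-i)*y), mul_pow, hqodd.neg_pow, hiq]; ring
    have hsum : a^(q+1) + b^(q+1) = 2*(x^(q+1) + y^(q+1)) := by
      rw [pow_succ a, pow_succ b, pow_succ x, pow_succ y, haq, hbq, hadef, hbdef]
      linear_combination (2*y^q*y) * hi
    have hsum2 : a^(q+1) + b^(q+1) = -(2 * ((π:F)^r * z^(q+1))) := by
      rw [hsum]; linear_combination 2 * h2
    have habr : a^r * b^r = (π:F)^r * z^(q+1) := by
      rw [← mul_pow, hab, mul_pow, ← pow_mul, hr2]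
    have e1 : a^(q+1) = a^r * a^r := by rw [← pow_add]; congr 1; omega
    have e2 : b^(q+1) = b^r * b^r := by rw [← pow_add]; congr 1; omega
    rw [e1, e2] at hsum2
    have hsq0 : (a^r + b^r)^2 = 0 := by linear_combination hsum2 + 2*habr
    have harb : a^r = -(b^r) := eq_neg_of_add_eq_zero_left (sq_eq_zero_iff.mp hsq0)
    have hbz : b ≠ 0 := by
      have hne : (π:F) * z^2 ≠ 0 := mul_ne_zero (Units.ne_zero π) (pow_ne_zero 2 hz)
      rw [← hab] at hne
      exact fun hb0 => hne (by rw [hb0, mul_zero])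
    have hkey : (π:F)^r = -((b/z)^(q+1)) := by
      have h0 : (π:F)^r * z^(q+1) = -(b^(q+1)) := by
        rw [e2, ← habr, harb]; ring
      rw [div_pow, ← neg_div, eq_div_iff (pow_ne_zero _ hz)]
      exact h0
    set w : Fˣ := Units.mk0 (b/z) (div_ne_zero hbz hz) with hwdef
    have hwu : π^r = -(w^(q+1)) := by
      apply Units.ext
      rw [Units.val_pow_eq_pow_val, Units.val_neg, Units.val_pow_eq_pow_val]
      exact hkey
    obtain ⟨e, he⟩ := Subgroup.mem_zpowers_iff.mp (hπ w)
    obtain ⟨d, hd⟩ := Subgroup.mem_zpowers_iff.mp (hπ (-1))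
    have hord : orderOf π = p^m - 1 := by
      rw [orderOf_eq_card_of_forall_mem_zpowers hπ, Nat.card_units, Nat.card_eq_fintype_card, hF]
    have hd2 : ((orderOf π : ℤ)) ∣ 2*d := by
      rw [orderOf_dvd_iff_zpow_eq_one, mul_comm, zpow_mul, hd, zpow_two, neg_one_mul, neg_neg]
    have heq : π^((r:ℤ)) = π^(d + e*((q:ℤ)+1)) := by
      have hq1' : ((q:ℤ)+1) = ((q+1 : ℕ) : ℤ) := by push_cast; ring
      rw [zpow_add, hd, zpow_mul, he, hq1', zpow_natCast, hwu, neg_one_mul, zpow_natCast]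
    have hmain : ((orderOf π : ℤ)) ∣ (r:ℤ) - (d + e*((q:ℤ)+1)) := by
      rw [orderOf_dvd_iff_zpow_eq_one, zpow_sub, ← heq]
      simp
    obtain ⟨c, hc⟩ := hd2
    obtain ⟨t, ht⟩ := hmain
    set N : ℤ := ((orderOf π : ℕ) : ℤ) with hNdef
    have h2r : (2:ℤ)*(r:ℤ) = (q:ℤ)+1 := by exact_mod_cast hr2
    have hfinal : ((q:ℤ)+1) * (1 - 2*e) = N * (2*t + c) := by
      linear_combination 2*ht + hc - h2r
    obtain ⟨hA, hB⟩ := stmt5_key p k m hp4 hko hme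
    have hNV : (2:ℤ)^(padicValNat 2 (p+1) + 1) ∣ N := by
      have hcast : N = (p:ℤ)^m - 1 := by
        rw [hNdef, hord, Nat.cast_sub (Nat.one_le_pow _ _ hp.pos)]
        push_cast; ring
      rw [hcast]; exact hB
    have hVq : (2:ℤ)^(padicValNat 2 (p+1) + 1) ∣ ((q:ℤ)+1) := by
      have hco : IsCoprime ((2:ℤ)^(padicValNat 2 (p+1) + 1)) (1 - 2*e) :=
        IsCoprime.pow_left ⟨e, 1, by ring⟩
      exact hco.dvd_of_dvd_mul_right (hfinal ▸ hNV.mul_right (2*t + c))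
    apply hA
    have : ((q:ℤ)+1) = (p:ℤ)^k + 1 := by rw [hqdef]; push_cast; ring
    rwa [this] at hVq
end

section
/- Let p be an odd prime and m, k positive integers with v₂(k) < v₂(m), and let π be a primitive element of F_{p^m}. If p^k ≡ 1 (mod 4), then the number of triples (x,y,z) ∈ F_{p^m}³ satisfying both x² + y² − πz² = 0 and x^{p^k+1} + y^{p^k+1} + π^{(p^k+1)/2} z^{p^k+1} = 0 equals 2p^m − 1. -/
-- v2(p^k - 1) < v2(p^m - 1)
theorem aux_v2_lt (p m k : ℕ) (hp : p.Prime) (hpo : Odd p) (hm : 0 < m) (hk : 0 < k)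
    (hv : padicValNat 2 k < padicValNat 2 m) :
    padicValNat 2 (p ^ k - 1) < padicValNat 2 (p ^ m - 1) := by
  haveI : Fact (Nat.Prime 2) := ⟨Nat.prime_two⟩
  have hp3 : 3 ≤ p := by
    have := hp.two_le; rcases hpo with ⟨t, ht⟩; omega
  have hpow : ∀ n : ℕ, 0 < n → 1 < p ^ n := fun n hn =>
    Nat.one_lt_pow (by omega) (by omega)
  have hodd : ∀ n : ℕ, Odd (p ^ n) := fun n => hpo.pow
  have hndvd : ¬ 2 ∣ p := by rcases hpo with ⟨t, ht⟩; omega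
  have h2m : 2 ∣ m := by
    by_contra h
    rw [padicValNat.eq_zero_of_not_dvd h] at hv
    omega
  have heven_m : Even m := ⟨m / 2, by omega⟩
  have step2 : padicValNat 2 (p ^ m - 1) + 1 =
      padicValNat 2 (p + 1) + padicValNat 2 (p - 1) + padicValNat 2 m := by
    have := padicValNat.pow_two_sub_pow (x := p) (y := 1) (by omega) (by omega) hndvd
      (n := m) (by omega) heven_m
    simpa using this
  have step1 : padicValNat 2 (p ^ (2 * k) - 1) + 1 =
      padicValNat 2 (p + 1) + padicValNat 2 (p - 1) + padicValNat 2 (2 * k) := by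
    have := padicValNat.pow_two_sub_pow (x := p) (y := 1) (by omega) (by omega) hndvd
      (n := 2 * k) (by omega) ⟨k, by omega⟩
    simpa using this
  have hfac : p ^ (2 * k) - 1 = (p ^ k - 1) * (p ^ k + 1) := by
    have h1 : 1 < p ^ k := hpow k hk
    have h2 : p ^ (2 * k) = p ^ k * p ^ k := by rw [two_mul, pow_add]
    zify [h1.le, Nat.one_le_iff_ne_zero.mpr (by positivity : p ^ (2*k) ≠ 0)]
    rw [two_mul, pow_add]
    ring
  have hmulv : padicValNat 2 ((p ^ k - 1) * (p ^ k + 1)) =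
      padicValNat 2 (p ^ k - 1) + padicValNat 2 (p ^ k + 1) :=
    padicValNat.mul (by have := hpow k hk; omega) (by omega)
  have hone : 1 ≤ padicValNat 2 (p ^ k + 1) := by
    apply one_le_padicValNat_of_dvd (by omega)
    rcases hodd k with ⟨t, ht⟩; omega
  have h2k : padicValNat 2 (2 * k) = 1 + padicValNat 2 k := by
    rw [padicValNat.mul (by omega) (by omega), padicValNat.self (by omega)]
  rw [hfac, hmulv] at step1
  omega

theorem aux_gcd_dvd (p m k : ℕ) (hp : p.Prime) (hpo : Odd p) (hm : 0 < m) (hk : 0 < k)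
    (hv : padicValNat 2 k < padicValNat 2 m) :
    Nat.gcd (p ^ k - 1) (p ^ m - 1) ∣ (p ^ m - 1) / 2 := by
  have hp3 : 3 ≤ p := by
    have := hp.two_le; rcases hpo with ⟨t, ht⟩; omega
  have hk1 : 1 < p ^ k := Nat.one_lt_pow (by omega) (by omega)
  have hm1 : 1 < p ^ m := Nat.one_lt_pow (by omega) (by omega)
  set d := Nat.gcd (p ^ k - 1) (p ^ m - 1) with hd
  have hd0 : d ≠ 0 := Nat.ne_of_gt (Nat.gcd_pos_of_pos_left _ (by omega))
  have hn0 : p ^ m - 1 ≠ 0 := by omega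
  have h2d : 2 * d ∣ p ^ m - 1 := by
    rw [← Nat.factorization_le_iff_dvd (by omega) hn0, Nat.factorization_mul two_ne_zero hd0]
    rw [Finsupp.le_def]
    intro q
    simp only [Finsupp.coe_add, Pi.add_apply]
    have hdm : d.factorization ≤ (p ^ m - 1).factorization :=
      (Nat.factorization_le_iff_dvd hd0 hn0).mpr (Nat.gcd_dvd_right _ _)
    have hdk : d.factorization ≤ (p ^ k - 1).factorization :=
      (Nat.factorization_le_iff_dvd hd0 (by omega)).mpr (Nat.gcd_dvd_left _ _)
    rw [Nat.Prime.factorization Nat.prime_two]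
    by_cases hq : q = 2
    · subst hq
      simp only [Finsupp.single_eq_same]
      have h1 := Finsupp.le_def.mp hdk 2
      have h2 := aux_v2_lt p m k hp hpo hm hk hv
      simp only [Nat.factorization_def _ Nat.prime_two] at h1 ⊢
      omega
    · rw [Finsupp.single_eq_of_ne (by omega)]
      have := Finsupp.le_def.mp hdm q
      omega
  rcases h2d with ⟨c, hc⟩
  exact ⟨c, by rw [hc, mul_assoc, Nat.mul_div_cancel_left _ two_pos]⟩

theorem stmt_6 (p m k : ℕ) (hp : p.Prime) (hpo : Odd p) (hm : 0 < m) (hk : 0 < k)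
    (hv : padicValNat 2 k < padicValNat 2 m) (hmod : p ^ k % 4 = 1)
    (F : Type*) [Field F] [Fintype F] (hF : Fintype.card F = p ^ m)
    (π : Fˣ) (hπ : ∀ x : Fˣ, x ∈ Subgroup.zpowers π) :
    Nat.card {xyz : F × F × F //
        xyz.1 ^ 2 + xyz.2.1 ^ 2 - (π : F) * xyz.2.2 ^ 2 = 0 ∧
        xyz.1 ^ (p ^ k + 1) + xyz.2.1 ^ (p ^ k + 1)
          + (π : F) ^ ((p ^ k + 1) / 2) * xyz.2.2 ^ (p ^ k + 1) = 0} =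
      2 * p ^ m - 1 := by
  classical
  haveI : Fact (Nat.Prime 2) := ⟨Nat.prime_two⟩
  haveI hfp : Fact p.Prime := ⟨hp⟩
  have hp3 : 3 ≤ p := by have := hp.two_le; rcases hpo with ⟨t, ht⟩; omega
  have hq1 : 1 < p ^ m := Nat.one_lt_pow (by omega) (by omega)
  have hs1 : 1 < p ^ k := Nat.one_lt_pow (by omega) (by omega)
  have hsodd : Odd (p ^ k) := hpo.pow
  have hqodd : Odd (p ^ m) := hpo.pow
  set s := p ^ k with hs
  set q := p ^ m with hq
  -- characteristic
  haveI hchar : CharP F p := by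
    have hcr : CharP F (ringChar F) := ringChar.charP F
    obtain ⟨n, hprime, hcard⟩ := FiniteField.card F (ringChar F)
    have hpr : p = ringChar F := by
      have hdvd : p ∣ (ringChar F) ^ (n : ℕ) := by
        rw [← hcard, hF]
        exact dvd_pow_self p (by omega)
      exact (Nat.prime_dvd_prime_iff_eq hp hprime).mp (hp.dvd_of_dvd_pow hdvd)
    rwa [← hpr] at hcr
  have h2F : (2 : F) ≠ 0 := by
    intro h
    have h2 : (p : ℕ) ∣ 2 := (CharP.cast_eq_zero_iff F p 2).mp (by exact_mod_cast h)
    have := Nat.le_of_dvd (by omega) h2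
    omega
  -- square root of -1
  have h2m : 2 ∣ m := by
    by_contra h
    rw [padicValNat.eq_zero_of_not_dvd h] at hv
    omega
  have hq4 : q % 4 = 1 := by
    obtain ⟨n, hn⟩ := h2m
    obtain ⟨t, ht⟩ : Odd (p ^ n) := hpo.pow
    have hqe : q = (p ^ n) * (p ^ n) := by rw [hq, hn, two_mul, pow_add]
    have hsq : (2 * t + 1) * (2 * t + 1) = 4 * (t * t + t) + 1 := by ring
    rw [hqe, ht, hsq]
    omega
  obtain ⟨i, hi⟩ : IsSquare (-1 : F) := by
    apply FiniteField.isSquare_neg_one_iff.mpr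
    rw [hF]
    omega
  have hine : i ≠ 0 := by
    intro h
    rw [h, mul_zero] at hi
    exact (neg_ne_zero.mpr (one_ne_zero)) hi
  -- primitive element facts
  have hπ0 : (π : F) ≠ 0 := Units.ne_zero π
  have hord : orderOf π = q - 1 := by
    rw [orderOf_eq_card_of_forall_mem_zpowers hπ, Nat.card_units, Nat.card_eq_fintype_card, hF]
  have hq2 : 2 * ((q - 1) / 2) = q - 1 := by rcases hqodd with ⟨t, ht⟩; omega
  have hπhalf : ((π : F)) ^ ((q - 1) / 2) ≠ 1 := by
    intro h
    have hu : (π : Fˣ) ^ ((q - 1) / 2) = 1 := by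
      ext
      rw [Units.val_pow_eq_pow_val]
      exact h
    have hdvd := orderOf_dvd_of_pow_eq_one hu
    rw [hord] at hdvd
    have := Nat.le_of_dvd (by omega) hdvd
    omega
  -- the cyclic-subfield lemma
  have hA : ∀ t : F, t ≠ 0 → t ^ s = t → t ^ ((q - 1) / 2) = 1 := by
    intro t ht hts
    have h1 : t ^ (s - 1) = 1 := by
      have h1' : t ^ (s - 1) * t = 1 * t := by
        rw [one_mul, ← pow_succ, Nat.sub_add_cancel (by omega)]
        exact hts
      exact mul_right_cancel₀ ht h1'
    have h2 : t ^ (q - 1) = 1 := by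
      have := FiniteField.pow_card_sub_one_eq_one t ht
      rwa [hF] at this
    have h3 : t ^ Nat.gcd (s - 1) (q - 1) = 1 := pow_gcd_eq_one.mpr ⟨h1, h2⟩
    obtain ⟨c, hc⟩ := aux_gcd_dvd p m k hp hpo hm hk hv
    rw [hc, pow_mul, h3, one_pow]
  -- Frobenius
  have hfrob : ∀ a b : F, (a + b) ^ s = a ^ s + b ^ s := by
    intro a b
    rw [hs]
    exact add_pow_char_pow (R := F) (p := p) (n := k) (x := a) (y := b)
  have hhalf : 2 * ((s + 1) / 2) = s + 1 := by rcases hsodd with ⟨t, ht⟩; omega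
  have hoddhalf : Odd ((s + 1) / 2) := ⟨s / 4, by omega⟩
  -- the characterization of solutions
  have hiff : ∀ x y z : F,
      (x ^ 2 + y ^ 2 - (π : F) * z ^ 2 = 0 ∧
        x ^ (s + 1) + y ^ (s + 1) + (π : F) ^ ((s + 1) / 2) * z ^ (s + 1) = 0) ↔
      (z = 0 ∧ (x = i * y ∨ x = -(i * y))) := by
    intro x y z
    constructor
    · rintro ⟨e1, e2⟩
      rw [sub_eq_zero] at e1
      have e2' : x ^ (s + 1) + y ^ (s + 1) = -((π : F) ^ ((s + 1) / 2) * z ^ (s + 1)) := by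
        linear_combination e2
      have hz : z = 0 := by
        by_contra hz
        have e1s : (x ^ 2) ^ s + (y ^ 2) ^ s = ((π : F)) ^ s * (z ^ 2) ^ s := by
          rw [← hfrob, e1, mul_pow]
        have h4 : ((π : F) ^ ((s + 1) / 2)) ^ 2 = (π : F) ^ s * (π : F) := by
          rw [← pow_mul, mul_comm ((s+1)/2) 2, hhalf, pow_succ]
        have hkey : (x * y ^ s - x ^ s * y) ^ 2 = 0 := by
          have hc1 : (x * y ^ s - x ^ s * y) ^ 2 =
              (x ^ 2 + y ^ 2) * ((x ^ s) ^ 2 + (y ^ s) ^ 2) - (x ^ s * x + y ^ s * y) ^ 2 := by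
            ring
          rw [hc1, ← pow_right_comm x 2 s, ← pow_right_comm y 2 s, ← pow_succ,
            ← pow_succ, e1, e1s, e2']
          rw [pow_right_comm z 2 s]
          linear_combination (-((z ^ s) ^ 2 * z ^ 2)) * h4
        have hxy : x * y ^ s = x ^ s * y := by
          have := sq_eq_zero_iff.mp hkey
          linear_combination this
        by_cases hy : y = 0
        · subst hy
          by_cases hx : x = 0
          · subst hx
            simp only [ne_eq, OfNat.ofNat_ne_zero, not_false_eq_true, zero_pow, add_zero,
              zero_add] at e1
            exact hz (by
              have := e1.symm
              rcases mul_eq_zero.mp this with h | h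
              · exact absurd h hπ0
              · exact pow_eq_zero_iff (n := 2) (by omega) |>.mp h)
          · apply hπhalf
            have hc : (π : F) = (x * z⁻¹) ^ 2 := by
              field_simp
              linear_combination -e1
            rw [hc, ← pow_mul, hq2]
            have := FiniteField.pow_card_sub_one_eq_one (x * z⁻¹)
              (mul_ne_zero hx (inv_ne_zero hz))
            rwa [hF] at this
        · set t := (x ^ 2 + y ^ 2) * (y ^ 2)⁻¹ with htdef
          have hy2 : (y ^ 2 : F) ≠ 0 := pow_ne_zero _ hy
          have hxy20 : x ^ 2 + y ^ 2 ≠ 0 := by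
            intro h
            rw [h] at e1
            rcases mul_eq_zero.mp e1.symm with h' | h'
            · exact hπ0 h'
            · exact hz (pow_eq_zero_iff (n := 2) (by omega) |>.mp h')
          have ht0 : t ≠ 0 := mul_ne_zero hxy20 (inv_ne_zero hy2)
          have hts : t ^ s = t := by
            have h5 : ((x ^ s) ^ 2 + (y ^ s) ^ 2) * y ^ 2 = (x ^ 2 + y ^ 2) * (y ^ s) ^ 2 := by
              have hxy2 : (x * y ^ s) ^ 2 = (x ^ s * y) ^ 2 := by rw [hxy]
              linear_combination -hxy2
            rw [htdef, mul_pow, inv_pow, hfrob, pow_right_comm x 2 s, pow_right_comm y 2 s]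
            field_simp
            linear_combination h5
          have hthalf := hA t ht0 hts
          apply hπhalf
          have hπeq : (π : F) = t * (y * z⁻¹) ^ 2 := by
            rw [htdef]
            field_simp
            linear_combination -e1
          rw [hπeq, mul_pow, hthalf, one_mul, ← pow_mul, hq2]
          have := FiniteField.pow_card_sub_one_eq_one (y * z⁻¹)
            (mul_ne_zero hy (inv_ne_zero hz))
          rwa [hF] at this
      subst hz
      refine ⟨rfl, ?_⟩
      have h0 : x ^ 2 + y ^ 2 = 0 := by
        rw [e1]
        simp
      have hfac : (x - i * y) * (x + i * y) = 0 := by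
        linear_combination h0 + y ^ 2 * hi
      rcases mul_eq_zero.mp hfac with h | h
      · left; linear_combination h
      · right; linear_combination h
    · rintro ⟨hz, hxy⟩
      subst hz
      have h0 : x ^ 2 + y ^ 2 = 0 := by
        rcases hxy with h | h <;> subst h <;> linear_combination (-(y^2)) * hi
      constructor
      · rw [h0]
        simp
      · have hzs : (0 : F) ^ (s + 1) = 0 := zero_pow (by omega)
        rw [hzs, mul_zero, add_zero]
        have hx2 : x ^ 2 = -(y ^ 2) := by linear_combination h0
        have hxs : x ^ (s + 1) = -(y ^ (s + 1)) := by
          rw [← hhalf, pow_mul, pow_mul, hx2, Odd.neg_pow hoddhalf]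
        rw [hxs]
        ring
  -- counting
  have hcard := hF
  rw [Nat.card_eq_fintype_card]
  have hsub : Fintype.card {xyz : F × F × F //
        xyz.1 ^ 2 + xyz.2.1 ^ 2 - (π : F) * xyz.2.2 ^ 2 = 0 ∧
        xyz.1 ^ (s + 1) + xyz.2.1 ^ (s + 1)
          + (π : F) ^ ((s + 1) / 2) * xyz.2.2 ^ (s + 1) = 0} =
      (Finset.univ.filter (fun xyz : F × F × F =>
        xyz.1 ^ 2 + xyz.2.1 ^ 2 - (π : F) * xyz.2.2 ^ 2 = 0 ∧
        xyz.1 ^ (s + 1) + xyz.2.1 ^ (s + 1)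
          + (π : F) ^ ((s + 1) / 2) * xyz.2.2 ^ (s + 1) = 0)).card :=
    Fintype.card_subtype _
  rw [hsub]
  set s1 : Finset (F × F × F) := Finset.univ.image (fun y : F => (i * y, y, (0 : F))) with hS1
  set s2 : Finset (F × F × F) := Finset.univ.image (fun y : F => (-(i * y), y, (0 : F))) with hS2
  have hfilter : (Finset.univ.filter (fun xyz : F × F × F =>
        xyz.1 ^ 2 + xyz.2.1 ^ 2 - (π : F) * xyz.2.2 ^ 2 = 0 ∧
        xyz.1 ^ (s + 1) + xyz.2.1 ^ (s + 1)
          + (π : F) ^ ((s + 1) / 2) * xyz.2.2 ^ (s + 1) = 0)) = s1 ∪ s2 := by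
    ext ⟨x, y, z⟩
    rw [Finset.mem_filter, Finset.mem_union, hS1, hS2]
    simp only [Finset.mem_univ, true_and, Finset.mem_image, Prod.mk.injEq]
    rw [hiff x y z]
    constructor
    · rintro ⟨hz, h | h⟩
      · exact Or.inl ⟨y, h.symm, rfl, hz.symm⟩
      · exact Or.inr ⟨y, h.symm, rfl, hz.symm⟩
    · rintro (⟨a, ha1, ha2, ha3⟩ | ⟨a, ha1, ha2, ha3⟩)
      · subst ha2; exact ⟨ha3.symm, Or.inl ha1.symm⟩
      · subst ha2; exact ⟨ha3.symm, Or.inr ha1.symm⟩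
  rw [hfilter]
  have hinj1 : Function.Injective (fun y : F => (i * y, y, (0 : F))) := by
    intro a b h
    exact congrArg (fun v : F × F × F => v.2.1) h
  have hinj2 : Function.Injective (fun y : F => (-(i * y), y, (0 : F))) := by
    intro a b h
    exact congrArg (fun v : F × F × F => v.2.1) h
  have hc1 : s1.card = q := by
    rw [hS1, Finset.card_image_of_injective _ hinj1, Finset.card_univ, hF]
  have hc2 : s2.card = q := by
    rw [hS2, Finset.card_image_of_injective _ hinj2, Finset.card_univ, hF]
  have hinter : s1 ∩ s2 = {((0 : F), (0 : F), (0 : F))} := by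
    ext ⟨x, y, z⟩
    rw [Finset.mem_inter, hS1, hS2, Finset.mem_singleton]
    simp only [Finset.mem_univ, true_and, Finset.mem_image, Prod.mk.injEq]
    constructor
    · rintro ⟨⟨a, ha1, ha2, ha3⟩, ⟨b, hb1, hb2, hb3⟩⟩
      have h1 : i * y = x := by rw [← ha2]; exact ha1
      have h2 : -(i * y) = x := by rw [← hb2]; exact hb1
      have hy0 : y = 0 := by
        have h2iy : 2 * (i * y) = 0 := by linear_combination h1 - h2
        rcases mul_eq_zero.mp h2iy with h | h
        · exact absurd h h2F
        · rcases mul_eq_zero.mp h with h' | h'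
          · exact absurd h' hine
          · exact h'
      exact ⟨by rw [← h1, hy0, mul_zero], hy0, ha3.symm⟩
    · rintro ⟨hx, hy, hz⟩
      subst hx; subst hy; subst hz
      exact ⟨⟨0, by simp, rfl, rfl⟩, ⟨0, by simp, rfl, rfl⟩⟩
  have hunion := Finset.card_union_add_card_inter s1 s2
  rw [hinter, Finset.card_singleton, hc1, hc2] at hunion
  omega
end

section
/- Let p be an odd prime, m, k positive integers, π a primitive element of F_{p^m}, and suppose x, y ∈ F_{p^m}* satisfy x² + y² = π and x^{p^k+1} + y^{p^k+1} = −π^{(p^k+1)/2}. Then (x y^{p^k} − x^{p^k} y)² = 0, and hence x = λy for some λ ∈ F_{p^d}*, where d = gcd(m,k). -/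
lemma gcd_pow_sub_one_dvd (p m k : ℕ) (hp : 2 ≤ p) (hm : 0 < m) (hk : 0 < k) :
    Nat.gcd (p ^ m - 1) (p ^ k - 1) ∣ p ^ Nat.gcd m k - 1 := by
  set g := Nat.gcd (p ^ m - 1) (p ^ k - 1) with hg
  have hpm : 1 ≤ p ^ m := Nat.one_le_pow _ _ (by omega)
  have hpk : 1 ≤ p ^ k := Nat.one_le_pow _ _ (by omega)
  have hpd : 1 ≤ p ^ Nat.gcd m k := Nat.one_le_pow _ _ (by omega)
  have h1 : (p : ZMod g) ^ m = 1 := by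
    have h0 : ((p ^ m - 1 : ℕ) : ZMod g) = 0 :=
      (ZMod.natCast_eq_zero_iff _ _).2 (Nat.gcd_dvd_left _ _)
    rw [Nat.cast_sub hpm] at h0
    push_cast at h0
    linear_combination h0
  have h2 : (p : ZMod g) ^ k = 1 := by
    have h0 : ((p ^ k - 1 : ℕ) : ZMod g) = 0 :=
      (ZMod.natCast_eq_zero_iff _ _).2 (Nat.gcd_dvd_right _ _)
    rw [Nat.cast_sub hpk] at h0
    push_cast at h0
    linear_combination h0
  have ho : orderOf (p : ZMod g) ∣ Nat.gcd m k :=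
    Nat.dvd_gcd (orderOf_dvd_of_pow_eq_one h1) (orderOf_dvd_of_pow_eq_one h2)
  have h3 : (p : ZMod g) ^ Nat.gcd m k = 1 := orderOf_dvd_iff_pow_eq_one.mp ho
  rw [← ZMod.natCast_eq_zero_iff, Nat.cast_sub hpd]
  push_cast
  linear_combination h3

theorem stmt_7 (p m k : ℕ) (hp : p.Prime) (hpo : Odd p) (hm : 0 < m) (hk : 0 < k)
    (F : Type*) [Field F] [Fintype F] (hF : Fintype.card F = p ^ m)
    (π : Fˣ) (hπ : ∀ x : Fˣ, x ∈ Subgroup.zpowers π)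
    (x y : F) (hx : x ≠ 0) (hy : y ≠ 0)
    (h1 : x ^ 2 + y ^ 2 = (π : F))
    (h2 : x ^ (p ^ k + 1) + y ^ (p ^ k + 1) = -(π : F) ^ ((p ^ k + 1) / 2)) :
    (x * y ^ (p ^ k) - x ^ (p ^ k) * y) ^ 2 = 0 ∧
    ∃ l : F, l ≠ 0 ∧ l ^ (p ^ Nat.gcd m k) = l ∧ x = l * y := by
  have hp2 : 2 ≤ p := hp.two_le
  -- characteristic
  have hcard : ((Fintype.card F : ℕ) : F) = 0 := FiniteField.cast_card_eq_zero F
  have hpz : (p : F) = 0 := by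
    rw [hF] at hcard
    push_cast at hcard
    exact pow_eq_zero_iff hm.ne' |>.mp hcard
  haveI hchar : CharP F p := (CharP.charP_iff_prime_eq_zero hp).mpr hpz
  haveI : Fact p.Prime := ⟨hp⟩
  haveI : ExpChar F p := ExpChar.prime hp
  -- key identity
  have hq1 : Even (p ^ k + 1) := (hpo.pow).add_one
  have hq2 : (p ^ k + 1) / 2 * 2 = p ^ k + 1 := Nat.div_mul_cancel hq1.two_dvd
  have hfrob : (x ^ 2 + y ^ 2) ^ p ^ k = (x ^ 2) ^ p ^ k + (y ^ 2) ^ p ^ k :=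
    add_pow_char_pow _ _ _ _
  have key : (x * y ^ (p ^ k) - x ^ (p ^ k) * y) ^ 2 =
      (x ^ 2 + y ^ 2) ^ p ^ k * (x ^ 2 + y ^ 2)
        - (x ^ (p ^ k + 1) + y ^ (p ^ k + 1)) ^ 2 := by
    rw [hfrob]
    ring
  have hzero : (x * y ^ (p ^ k) - x ^ (p ^ k) * y) ^ 2 = 0 := by
    rw [key, h1, h2]
    rw [neg_pow, ← pow_mul, hq2]
    rw [← pow_succ]
    ring
  refine ⟨hzero, ?_⟩
  have heq : x * y ^ (p ^ k) = x ^ (p ^ k) * y :=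
    sub_eq_zero.mp (sq_eq_zero_iff.mp hzero)
  refine ⟨x / y, div_ne_zero hx hy, ?_, (div_mul_cancel₀ x hy).symm⟩
  -- (x/y)^(p^k) = x/y
  have hyk : y ^ (p ^ k) ≠ 0 := pow_ne_zero _ hy
  have hlk : (x / y) ^ (p ^ k) = x / y := by
    rw [div_pow, div_eq_div_iff hyk hy]
    linear_combination -heq
  have hlm : (x / y) ^ (p ^ m) = x / y := by
    rw [← hF]; exact FiniteField.pow_card _
  -- reduce to gcd
  set l := x / y with hl
  have hlne : l ≠ 0 := div_ne_zero hx hy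
  have hpow : ∀ n : ℕ, 0 < n → l ^ (p ^ n) = l → l ^ (p ^ n - 1) = 1 := by
    intro n hn h
    have h1n : 1 ≤ p ^ n := Nat.one_le_pow _ _ (by omega)
    have : l ^ (p ^ n - 1) * l = l := by
      rw [← pow_succ, Nat.sub_add_cancel h1n, h]
    field_simp at this
    exact this
  have hk1 : l ^ (p ^ k - 1) = 1 := hpow k hk hlk
  have hm1 : l ^ (p ^ m - 1) = 1 := hpow m hm hlm
  have hdvd : orderOf l ∣ Nat.gcd (p ^ m - 1) (p ^ k - 1) :=
    Nat.dvd_gcd (orderOf_dvd_of_pow_eq_one hm1) (orderOf_dvd_of_pow_eq_one hk1)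
  have hd1 : l ^ (p ^ Nat.gcd m k - 1) = 1 :=
    orderOf_dvd_iff_pow_eq_one.mp (hdvd.trans (gcd_pow_sub_one_dvd p m k hp2 hm hk))
  have h1n : 1 ≤ p ^ Nat.gcd m k := Nat.one_le_pow _ _ (by omega)
  calc l ^ (p ^ Nat.gcd m k) = l ^ (p ^ Nat.gcd m k - 1) * l := by
        rw [← pow_succ, Nat.sub_add_cancel h1n]
    _ = l := by rw [hd1, one_mul]
end

section
/- Let p be an odd prime, m, k positive integers with 1 ≤ v₂(m) < v₂(k), d = gcd(m,k), and π a primitive element of F_{p^m}. Then the number of triples (x,y,z) with x ∈ F_{p^m}* and y,z ∈ F_{p^m} satisfying (x^{p^k−1}y − y^{p^k})² + (x^{p^k−1}z − z^{p^k})² = 0 equals p^d(2p^m − p^d)(p^m − 1). -/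
private lemma aux_mod (p : ℕ) (hp : 2 ≤ p) (k m : ℕ) (hk : 0 < k) :
    (p ^ m - 1) % (p ^ k - 1) = p ^ (m % k) - 1 := by
  have h2 : 1 ≤ p ^ (m % k) := Nat.one_le_pow _ _ (by omega)
  have h1 : p ^ (m % k) ≤ p ^ m := Nat.pow_le_pow_right (by omega) (Nat.mod_le m k)
  have hdvd : (p ^ k - 1) ∣ (p ^ m - 1) - (p ^ (m % k) - 1) := by
    have h3 : p ^ m = p ^ (m % k) * (p ^ k) ^ (m / k) := by
      rw [← pow_mul, ← pow_add, Nat.mod_add_div]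
    have h4 : 1 ≤ (p ^ k) ^ (m / k) := Nat.one_le_pow _ _ (by positivity)
    have heq : (p ^ m - 1) - (p ^ (m % k) - 1) = p ^ (m % k) * ((p ^ k) ^ (m / k) - 1) := by
      have h5 : (p ^ m - 1) - (p ^ (m % k) - 1) = p ^ m - p ^ (m % k) := by omega
      rw [h5, h3, Nat.mul_sub, mul_one]
    rw [heq]
    exact Dvd.dvd.mul_left (by simpa using Nat.sub_dvd_pow_sub_pow (p ^ k) 1 (m / k)) _
  have hmodeq : (p ^ (m % k) - 1) ≡ (p ^ m - 1) [MOD p ^ k - 1] :=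
    (Nat.modEq_iff_dvd' (by omega)).mpr hdvd
  have hlt : p ^ (m % k) < p ^ k := Nat.pow_lt_pow_right (by omega) (Nat.mod_lt m hk)
  rw [Nat.ModEq] at hmodeq
  rw [← hmodeq, Nat.mod_eq_of_lt (by omega)]

private lemma aux_gcd (p : ℕ) (hp : 2 ≤ p) : ∀ k m : ℕ,
    Nat.gcd (p ^ k - 1) (p ^ m - 1) = p ^ (Nat.gcd k m) - 1 := by
  intro k
  induction k using Nat.strong_induction_on with
  | _ k ih =>
    intro m
    rcases Nat.eq_zero_or_pos k with rfl | hk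
    · simp
    · rw [Nat.gcd_rec (p ^ k - 1) (p ^ m - 1), aux_mod p hp k m hk,
        ih (m % k) (Nat.mod_lt m hk), Nat.gcd_rec k m]

private lemma aux_arith (a b : ℕ) (h1 : 1 ≤ b) (h2 : b ≤ a) :
    (a - 1) * (a * a - (a - b) * (a - b)) = b * (2 * a - b) * (a - 1) := by
  have h3 : (a - b) * (a - b) ≤ a * a := Nat.mul_le_mul (by omega) (by omega)
  have h4 : b ≤ 2 * a := by omega
  have h5 : (1 : ℕ) ≤ a := by omega
  zify [h2, h3, h4, h5]
  ring

theorem stmt_9 (p m k : ℕ) (hp : p.Prime) (hpo : Odd p) (hm : 0 < m) (hk : 0 < k)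
    (hv1 : 1 ≤ padicValNat 2 m) (hv2 : padicValNat 2 m < padicValNat 2 k)
    (F : Type*) [Field F] [Fintype F] (hF : Fintype.card F = p ^ m)
    (π : Fˣ) (hπ : ∀ x : Fˣ, x ∈ Subgroup.zpowers π) :
    Nat.card {t : F × F × F // t.1 ≠ 0 ∧
        (t.1 ^ (p ^ k - 1) * t.2.1 - t.2.1 ^ (p ^ k)) ^ 2
          + (t.1 ^ (p ^ k - 1) * t.2.2 - t.2.2 ^ (p ^ k)) ^ 2 = 0} =
      p ^ Nat.gcd m k * (2 * p ^ m - p ^ Nat.gcd m k) * (p ^ m - 1) := by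
  classical
  have hp2 : 2 ≤ p := hp.two_le
  -- characteristic
  have hcharp : CharP F p := by
    obtain ⟨n, hc, hcard⟩ := FiniteField.card F (ringChar F)
    have hdvd : p ∣ ringChar F := by
      have h1 : p ∣ Fintype.card F := by
        rw [hF]; exact dvd_pow_self p hm.ne'
      rw [hcard] at h1
      exact hp.dvd_of_dvd_pow h1
    have : ringChar F = p := ((Nat.prime_dvd_prime_iff_eq hp hc).mp hdvd).symm
    exact ringChar.of_eq this
  haveI := hcharp
  haveI : Fact p.Prime := ⟨hp⟩
  -- evenness
  have hme : 2 ∣ m := dvd_trans (dvd_trans (pow_dvd_pow 2 hv1) pow_padicValNat_dvd) (by simp)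
  have hke : 2 ∣ k := by
    have h1 : (1:ℕ) ≤ padicValNat 2 k := by omega
    exact dvd_trans (dvd_trans (pow_dvd_pow 2 h1) pow_padicValNat_dvd) (by simp)
  have hoddpow : ∀ j : ℕ, 2 ∣ j → p ^ j % 4 = 1 := by
    intro j hj
    obtain ⟨j', rfl⟩ := hj
    obtain ⟨t, ht⟩ := hpo.pow (n := j')
    have h1 : p ^ (2 * j') = (p ^ j') * (p ^ j') := by rw [two_mul, pow_add]
    have h2 : (p ^ j') * (p ^ j') = 4 * (t * t + t) + 1 := by rw [ht]; ring
    omega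
  set q := p ^ k with hqdef
  have hq2 : 2 ≤ q := le_trans hp2 (Nat.le_self_pow hk.ne' p)
  -- square root of -1
  obtain ⟨i, hi⟩ : IsSquare (-1 : F) := by
    rw [FiniteField.isSquare_neg_one_iff, hF]
    rw [hoddpow m hme]; omega
  have hi0 : i ≠ 0 := by
    intro h; rw [h, mul_zero] at hi; exact one_ne_zero (neg_eq_zero.mp hi)
  have hiq : i ^ q = i := by
    have hi4 : i ^ 4 = 1 := by
      have : i ^ 4 = (i * i) * (i * i) := by ring
      rw [this, ← hi]; ring
    have hq4 : q % 4 = 1 := hoddpow k hke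
    calc i ^ q = i ^ (4 * (q / 4) + q % 4) := by rw [Nat.div_add_mod]
      _ = (i ^ 4) ^ (q / 4) * i ^ (q % 4) := by rw [pow_add, pow_mul]
      _ = i := by rw [hi4, one_pow, one_mul, hq4, pow_one]
  have hpm2 : 2 ≤ p ^ m := le_trans hp2 (Nat.le_self_pow hm.ne' p)
  have h20 : (2 : F) ≠ 0 := by
    intro h
    have hpd : p ∣ 2 := (CharP.cast_eq_zero_iff F p 2).mp h
    have hub : p ≤ 2 := Nat.le_of_dvd (by norm_num) hpd
    have hodd := Nat.odd_iff.mp hpo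
    interval_cases p <;> omega
  -- key transformation lemma
  have hkey : ∀ x y z : F, x ≠ 0 →
      ((x ^ (q - 1) * y - y ^ q) ^ 2 + (x ^ (q - 1) * z - z ^ q) ^ 2 = 0 ↔
        ((y / x) - (y / x) ^ q) ^ 2 + ((z / x) - (z / x) ^ q) ^ 2 = 0) := by
    intro x y z hx
    have hxe : x ^ (q - 1) * x = x ^ q := by
      rw [← pow_succ]; congr 1; omega
    have htr : ∀ w : F, x ^ (q - 1) * w - w ^ q = x ^ q * ((w / x) - (w / x) ^ q) := by
      intro w
      have hw : x * (w / x) = w := by field_simp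
      calc x ^ (q - 1) * w - w ^ q
          = x ^ (q - 1) * (x * (w / x)) - (x * (w / x)) ^ q := by rw [hw]
        _ = (x ^ (q - 1) * x) * (w / x) - x ^ q * (w / x) ^ q := by rw [mul_pow]; ring
        _ = x ^ q * ((w / x) - (w / x) ^ q) := by rw [hxe]; ring
    rw [htr y, htr z]
    have hx2 : (x ^ q) ^ 2 ≠ 0 := pow_ne_zero _ (pow_ne_zero _ hx)
    constructor
    · intro h
      have h' : (x ^ q) ^ 2 * (((y / x) - (y / x) ^ q) ^ 2 + ((z / x) - (z / x) ^ q) ^ 2) = 0 := by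
        rw [← h]; ring
      rcases mul_eq_zero.mp h' with h'' | h''
      · exact absurd h'' hx2
      · exact h''
    · intro h
      have h' : (x ^ q * ((y / x) - (y / x) ^ q)) ^ 2 + (x ^ q * ((z / x) - (z / x) ^ q)) ^ 2
          = (x ^ q) ^ 2 * (((y / x) - (y / x) ^ q) ^ 2 + ((z / x) - (z / x) ^ q) ^ 2) := by ring
      rw [h', h, mul_zero]
  -- first equivalence
  let e1 : {t : F × F × F // t.1 ≠ 0 ∧
        (t.1 ^ (q - 1) * t.2.1 - t.2.1 ^ q) ^ 2 + (t.1 ^ (q - 1) * t.2.2 - t.2.2 ^ q) ^ 2 = 0}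
      ≃ {x : F // x ≠ 0} ×
        {ab : F × F // (ab.1 - ab.1 ^ q) ^ 2 + (ab.2 - ab.2 ^ q) ^ 2 = 0} :=
    { toFun := fun t => (⟨t.1.1, t.2.1⟩, ⟨(t.1.2.1 / t.1.1, t.1.2.2 / t.1.1),
        (hkey t.1.1 t.1.2.1 t.1.2.2 t.2.1).mp t.2.2⟩)
      invFun := fun xt => ⟨(xt.1.1, xt.1.1 * xt.2.1.1, xt.1.1 * xt.2.1.2), xt.1.2, by
        have hx := xt.1.2
        have ha : xt.1.1 * xt.2.1.1 / xt.1.1 = xt.2.1.1 := by field_simp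
        have hb : xt.1.1 * xt.2.1.2 / xt.1.1 = xt.2.1.2 := by field_simp
        rw [hkey _ _ _ hx, ha, hb]
        exact xt.2.2⟩
      left_inv := by
        rintro ⟨⟨x, y, z⟩, hx, h⟩
        apply Subtype.ext
        simp only [Prod.mk.injEq]
        refine ⟨by simp, ?_, ?_⟩ <;> field_simp
      right_inv := by
        rintro ⟨⟨x, hx⟩, ⟨⟨a, b⟩, h⟩⟩
        simp only [Prod.mk.injEq, Subtype.mk.injEq]
        refine ⟨by simp, ?_, ?_⟩ <;> field_simp }
  -- second equivalence
  have hfact : ∀ a b : F, (a - a ^ q) ^ 2 + (b - b ^ q) ^ 2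
      = ((a + i * b) - (a + i * b) ^ q) * ((a - i * b) - (a - i * b) ^ q) := by
    intro a b
    have h1 : (a + i * b) ^ q = a ^ q + i * b ^ q := by
      rw [hqdef, add_pow_char_pow, mul_pow, ← hqdef, hiq]
    have h2 : (a - i * b) ^ q = a ^ q - i * b ^ q := by
      rw [hqdef, sub_pow_char_pow, mul_pow, ← hqdef, hiq]
    rw [h1, h2]
    linear_combination (-(b - b ^ q) ^ 2) * hi
  let ebase : F × F ≃ F × F :=
    { toFun := fun ab => (ab.1 + i * ab.2, ab.1 - i * ab.2)
      invFun := fun uv => ((uv.1 + uv.2) / 2, (uv.1 - uv.2) / (2 * i))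
      left_inv := by
        rintro ⟨a, b⟩
        simp only [Prod.mk.injEq]
        constructor <;> field_simp <;> ring
      right_inv := by
        rintro ⟨u, v⟩
        simp only [Prod.mk.injEq]
        constructor <;> field_simp <;> ring }
  let e2 : {ab : F × F // (ab.1 - ab.1 ^ q) ^ 2 + (ab.2 - ab.2 ^ q) ^ 2 = 0}
      ≃ {uv : F × F // uv.1 ^ q = uv.1 ∨ uv.2 ^ q = uv.2} :=
    ebase.subtypeEquiv (by
      rintro ⟨a, b⟩
      simp only [ebase, Equiv.coe_fn_mk]
      rw [hfact a b, mul_eq_zero, sub_eq_zero, sub_eq_zero]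
      constructor
      · rintro (h | h)
        · exact Or.inl h.symm
        · exact Or.inr h.symm
      · rintro (h | h)
        · exact Or.inl h.symm
        · exact Or.inr h.symm)
  -- cardinality of the fixed-point set
  set d := Nat.gcd m k with hddef
  have hdm : d ∣ m := Nat.gcd_dvd_left m k
  have hdpos : 0 < d := Nat.gcd_pos_of_pos_left k hm
  have hdlem : d ≤ m := Nat.le_of_dvd hm hdm
  set g : ℕ := p ^ d - 1 with hgdef
  have hpd1 : 1 ≤ p ^ d := Nat.one_le_pow _ _ (by omega)
  have hpdm : p ^ d ≤ p ^ m := Nat.pow_le_pow_right (by omega) hdlem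
  have hg0 : 0 < g := by
    have : 2 ≤ p ^ d := le_trans hp2 (Nat.le_self_pow hdpos.ne' p)
    omega
  have hcardU : Fintype.card Fˣ = p ^ m - 1 := by
    rw [Fintype.card_units, hF]
  have hggcd : Nat.gcd (q - 1) (Fintype.card Fˣ) = g := by
    rw [hcardU, hqdef, aux_gcd p hp2 k m, Nat.gcd_comm k m]
  -- the predicate equivalence
  have hpred : ∀ c : F, (c ^ q = c) ↔ (c = 0 ∨ c ^ g = 1) := by
    intro c
    constructor
    · intro h
      by_cases hc : c = 0
      · exact Or.inl hc
      · right
        have hq1' : q - 1 + 1 = q := by omega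
        have hcq : c ^ (q - 1) * c = 1 * c := by
          rw [one_mul, ← pow_succ, hq1']; exact h
        have hc1 : c ^ (q - 1) = 1 := mul_right_cancel₀ hc hcq
        set u : Fˣ := Units.mk0 c hc with hu
        have hu1 : u ^ (q - 1) = 1 := by
          ext; rw [Units.val_pow_eq_pow_val, Units.val_one]; exact hc1
        have := (pow_gcd_eq_one (a := u) (m := q - 1) (n := Fintype.card Fˣ)).mpr ⟨hu1, pow_card_eq_one⟩
        rw [hggcd] at this
        have : (u : F) ^ g = 1 := by
          rw [← Units.val_pow_eq_pow_val, this, Units.val_one]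
        exact this
    · rintro (rfl | h)
      · rw [zero_pow (by omega : q ≠ 0)]
      · have hgd : g ∣ q - 1 := by
          rw [← hggcd]; exact Nat.gcd_dvd_left _ _
        obtain ⟨e, he⟩ := hgd
        have hc1 : c ^ (q - 1) = 1 := by
          rw [he, pow_mul, h, one_pow]
        have hsucc : q - 1 + 1 = q := by omega
        calc c ^ q = c ^ (q - 1 + 1) := by rw [hsucc]
          _ = c ^ (q - 1) * c := pow_succ c (q - 1)
          _ = c := by rw [hc1, one_mul]
  -- primitive root and count of g-th roots of unity
  have hord : orderOf π = p ^ m - 1 := by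
    rw [orderOf_eq_card_of_forall_mem_zpowers hπ, Nat.card_eq_fintype_card, hcardU]
  have hprim : IsPrimitiveRoot (π : F) (p ^ m - 1) := by
    rw [IsPrimitiveRoot.coe_units_iff]
    have := IsPrimitiveRoot.orderOf π
    rwa [hord] at this
  have hgdvd : g ∣ p ^ m - 1 := by
    have : Nat.gcd (q - 1) (p ^ m - 1) = g := by rw [← hcardU, hggcd]
    rw [← this]; exact Nat.gcd_dvd_right _ _
  obtain ⟨e, he⟩ := hgdvd
  have hprimg : IsPrimitiveRoot ((π : F) ^ e) g :=
    hprim.pow (by omega) (by rw [he, mul_comm])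
  have hcard_nth : (Polynomial.nthRootsFinset g (1 : F)).card = g :=
    hprimg.card_nthRootsFinset
  have hcardR : Fintype.card {c : F // c ^ q = c} = p ^ d := by
    rw [Fintype.card_subtype]
    have hset : Finset.filter (fun c : F => c ^ q = c) Finset.univ
        = insert (0 : F) (Polynomial.nthRootsFinset g (1 : F)) := by
      ext c
      simp only [Finset.mem_filter, Finset.mem_univ, true_and, Finset.mem_insert,
        Polynomial.mem_nthRootsFinset hg0]
      exact hpred c
    rw [hset, Finset.card_insert_of_notMem, hcard_nth]
    · omega
    · intro h0
      rw [Polynomial.mem_nthRootsFinset hg0] at h0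
      rw [zero_pow hg0.ne'] at h0
      exact zero_ne_one h0
  -- cardinality of the complement pieces
  have hcardNR : Fintype.card {c : F // ¬ c ^ q = c} = p ^ m - p ^ d := by
    rw [Fintype.card_subtype_compl, hcardR, hF]
  -- cardinality of U
  have hcardU2 : Fintype.card {uv : F × F // uv.1 ^ q = uv.1 ∨ uv.2 ^ q = uv.2}
      = p ^ m * p ^ m - (p ^ m - p ^ d) * (p ^ m - p ^ d) := by
    have hcompl := Fintype.card_subtype_compl
      (fun uv : F × F => uv.1 ^ q = uv.1 ∨ uv.2 ^ q = uv.2)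
    have hle := Fintype.card_subtype_le
      (fun uv : F × F => uv.1 ^ q = uv.1 ∨ uv.2 ^ q = uv.2)
    have hprod : Fintype.card (F × F) = p ^ m * p ^ m := by
      rw [Fintype.card_prod, hF]
    have hcc : Fintype.card {uv : F × F // ¬ (uv.1 ^ q = uv.1 ∨ uv.2 ^ q = uv.2)}
        = (p ^ m - p ^ d) * (p ^ m - p ^ d) := by
      have eAnd : {uv : F × F // ¬ (uv.1 ^ q = uv.1 ∨ uv.2 ^ q = uv.2)}
          ≃ {uv : F × F // ¬ uv.1 ^ q = uv.1 ∧ ¬ uv.2 ^ q = uv.2} :=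
        Equiv.subtypeEquivRight (by intro uv; rw [not_or])
      have eProd : {uv : F × F // ¬ uv.1 ^ q = uv.1 ∧ ¬ uv.2 ^ q = uv.2}
          ≃ {c : F // ¬ c ^ q = c} × {c : F // ¬ c ^ q = c} :=
        Equiv.subtypeProdEquivProd (p := fun c : F => ¬ c ^ q = c) (q := fun c : F => ¬ c ^ q = c)
      rw [Fintype.card_congr (eAnd.trans eProd), Fintype.card_prod, hcardNR]
    rw [hcc, hprod] at hcompl
    rw [hprod] at hle
    omega
  -- putting it together
  have hcardS : Nat.card {t : F × F × F // t.1 ≠ 0 ∧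
        (t.1 ^ (q - 1) * t.2.1 - t.2.1 ^ q) ^ 2 + (t.1 ^ (q - 1) * t.2.2 - t.2.2 ^ q) ^ 2 = 0}
      = (p ^ m - 1) * (p ^ m * p ^ m - (p ^ m - p ^ d) * (p ^ m - p ^ d)) := by
    rw [Nat.card_congr e1, Nat.card_prod, Nat.card_congr e2]
    have hx0 : Nat.card {x : F // x ≠ 0} = p ^ m - 1 := by
      rw [Nat.card_congr (unitsEquivNeZero (G₀ := F)).symm, Nat.card_eq_fintype_card, hcardU]
    rw [hx0, Nat.card_eq_fintype_card, hcardU2]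
  rw [hcardS]
  exact aux_arith (p ^ m) (p ^ d) hpd1 hpdm
end

section
/- Let p be an odd prime, m, k positive integers with 1 ≤ v₂(m) < v₂(k), d = gcd(m,k), and π a primitive element of F_{p^m}. Then the number of triples (x,y,z) with x ∈ F_{p^m}* and y,z ∈ F_{p^m} satisfying (x^{p^k−1}y − y^{p^k})² = π(x^{p^k−1}z + π^{(p^k−1)/2} z^{p^k})² equals p^d(p^m − 1). -/
private lemma geom_nat (x n : ℕ) (hx : 1 ≤ x) :
    x ^ n - 1 = (x - 1) * ∑ i ∈ Finset.range n, x ^ i := by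
  have h := geom_sum_mul (x : ℤ) n
  have h1 : 1 ≤ x ^ n := Nat.one_le_pow _ _ hx
  zify [hx, h1]
  linear_combination -h

private lemma sq_nat (x d : ℕ) (hx : 1 ≤ x) :
    x ^ (2 * d) - 1 = (x ^ d - 1) * (x ^ d + 1) := by
  have h1 : 1 ≤ x ^ d := Nat.one_le_pow _ _ hx
  have h2 : 1 ≤ x ^ (2 * d) := Nat.one_le_pow _ _ hx
  zify [h1, h2]
  rw [two_mul, pow_add]
  ring

theorem stmt_10 (p m k : ℕ) (hp : p.Prime) (hpo : Odd p) (hm : 0 < m) (hk : 0 < k)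
    (hv1 : 1 ≤ padicValNat 2 m) (hv2 : padicValNat 2 m < padicValNat 2 k)
    (F : Type*) [Field F] [Fintype F] (hF : Fintype.card F = p ^ m)
    (π : Fˣ) (hπ : ∀ x : Fˣ, x ∈ Subgroup.zpowers π) :
    Nat.card {t : F × F × F // t.1 ≠ 0 ∧
        (t.1 ^ (p ^ k - 1) * t.2.1 - t.2.1 ^ (p ^ k)) ^ 2 =
          (π : F) * (t.1 ^ (p ^ k - 1) * t.2.2
            + (π : F) ^ ((p ^ k - 1) / 2) * t.2.2 ^ (p ^ k)) ^ 2} =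
      p ^ Nat.gcd m k * (p ^ m - 1) := by
  classical
  have hp1 : 1 < p := hp.one_lt
  have hp3 : 3 ≤ p := by
    have := Nat.odd_iff.mp hpo
    omega
  have hm0 : m ≠ 0 := hm.ne'
  have hk0 : k ≠ 0 := hk.ne'
  set d := Nat.gcd m k with hd
  have hd0 : d ≠ 0 := Nat.gcd_ne_zero_left hm0
  have hdm : d ∣ m := Nat.gcd_dvd_left m k
  have hdk : d ∣ k := Nat.gcd_dvd_right m k
  -- valuation facts : m / d odd, k / d even
  have hdf : d.factorization 2 = m.factorization 2 := by
    rw [hd, Nat.factorization_gcd hm0 hk0, Finsupp.inf_apply]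
    have h2 : Nat.Prime 2 := Nat.prime_two
    rw [Nat.factorization_def m h2, Nat.factorization_def k h2]
    exact min_eq_left hv2.le
  have hmd0 : m / d ≠ 0 := (Nat.div_pos (Nat.le_of_dvd hm hdm) (Nat.pos_of_ne_zero hd0)).ne'
  have hkd0 : k / d ≠ 0 := (Nat.div_pos (Nat.le_of_dvd hk hdk) (Nat.pos_of_ne_zero hd0)).ne'
  have hf_odd : Odd (m / d) := by
    have h2 : ¬ 2 ∣ m / d := by
      intro h2dvd
      have h1 := (Nat.Prime.dvd_iff_one_le_factorization Nat.prime_two hmd0).mp h2dvd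
      rw [Nat.factorization_div hdm, Finsupp.tsub_apply, hdf] at h1
      omega
    rw [Nat.odd_iff]
    omega
  have he_even : 2 ∣ k / d := by
    refine (Nat.Prime.dvd_iff_one_le_factorization Nat.prime_two hkd0).mpr ?_
    rw [Nat.factorization_div hdk, Finsupp.tsub_apply, hdf]
    rw [Nat.factorization_def m Nat.prime_two, Nat.factorization_def k Nat.prime_two]
    omega
  -- characteristic
  have hcharF : CharP F p := by
    obtain ⟨p', hc⟩ := CharP.exists F
    haveI := hc
    obtain ⟨n, hp', hcard⟩ := FiniteField.card F p'
    have hpp : p = p' := by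
      have h1 : p ∣ p' ^ (n : ℕ) := by
        rw [← hcard, hF]
        exact dvd_pow_self p hm0
      exact (Nat.prime_dvd_prime_iff_eq hp hp').mp (hp.dvd_of_dvd_pow h1)
    rwa [hpp]
  haveI := hcharF
  haveI : Fact p.Prime := ⟨hp⟩
  have hinj : ∀ e : ℕ, Function.Injective fun x : F => x ^ p ^ e := by
    intro e
    have h := (iterateFrobenius F p e).injective
    intro a b hab
    exact h (by simpa [iterateFrobenius_def] using hab)
  -- closure of fixed points under gcd
  have hppos : ∀ e : ℕ, 1 ≤ p ^ e := fun e => Nat.one_le_pow _ _ hp.pos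
  have hmulfix : ∀ (a t : ℕ) (u : F), u ^ p ^ a = u → u ^ p ^ (a * t) = u := by
    intro a t u hu
    induction t with
    | zero => simp
    | succ t ih => rw [Nat.mul_succ, pow_add, pow_mul, ih, hu]
  have hgcdfix : ∀ a b : ℕ, ∀ u : F, u ^ p ^ a = u → u ^ p ^ b = u → u ^ p ^ Nat.gcd a b = u := by
    intro a b
    induction a, b using Nat.gcd.induction with
    | H0 n => intro u _ h2; simpa using h2
    | H1 a b ha ih =>
      intro u h1 h2
      rw [Nat.gcd_rec]
      refine ih u ?_ h1
      have key : (u ^ p ^ (b % a)) ^ p ^ (a * (b / a)) = u ^ p ^ (a * (b / a)) := by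
        rw [hmulfix _ _ u h1, ← pow_mul, ← pow_add]
        have : b % a + a * (b / a) = b := by
          have := Nat.div_add_mod b a
          omega
        rw [this, h2]
      exact hinj _ key
  -- cardinalities and order of π
  have hcardU : Nat.card Fˣ = p ^ m - 1 := by
    rw [Nat.card_units, Nat.card_eq_fintype_card, hF]
  have hord : orderOf π = p ^ m - 1 := by
    rw [orderOf_eq_card_of_forall_mem_zpowers hπ, hcardU]
  have hqodd : Odd (p ^ m) := hpo.pow
  have h2q : 2 ∣ p ^ m - 1 := (Nat.Odd.sub_odd hqodd odd_one).two_dvd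
  have h2k : 2 ∣ p ^ k - 1 := (Nat.Odd.sub_odd hpo.pow odd_one).two_dvd
  have hpm3 : 3 ≤ p ^ m := le_trans hp3 (Nat.le_self_pow hm0 p)
  have hpd3 : 3 ≤ p ^ d := le_trans hp3 (Nat.le_self_pow hd0 p)
  -- π is a nonsquare
  have hnonsq : ∀ c : F, c ^ 2 ≠ (π : F) := by
    intro c hc
    have hc0 : c ≠ 0 := by
      rintro rfl
      rw [zero_pow (by norm_num)] at hc
      exact π.ne_zero hc.symm
    have hcu : (Units.mk0 c hc0) ^ 2 = π := Units.ext (by simpa using hc)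
    have hpow : π ^ ((p ^ m - 1) / 2) = 1 := by
      rw [← hcu, ← pow_mul, Nat.mul_div_cancel' h2q, ← hcardU, Nat.card_eq_fintype_card]
      exact pow_card_eq_one
    have hdvd := orderOf_dvd_of_pow_eq_one hpow
    rw [hord] at hdvd
    have hle := Nat.le_of_dvd (by omega) hdvd
    have hlt : (p ^ m - 1) / 2 < p ^ m - 1 := Nat.div_lt_self (by omega) one_lt_two
    omega
  -- geometric sum
  set s := ∑ i ∈ Finset.range (m / d), (p ^ d) ^ i with hs
  have hgeom : p ^ m - 1 = (p ^ d - 1) * s := by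
    have hpm : (p ^ d) ^ (m / d) = p ^ m := by rw [← pow_mul, Nat.mul_div_cancel' hdm]
    rw [hs, ← hpm]
    exact geom_nat _ _ (hppos d)
  have hs0 : s ≠ 0 := by
    intro h0
    rw [h0, mul_zero] at hgeom
    omega
  have hsdvd : s ∣ p ^ m - 1 := ⟨p ^ d - 1, by rw [hgeom, mul_comm]⟩
  have hs_odd : Odd s := by
    rw [Nat.odd_iff]
    calc s % 2 = (∑ i ∈ Finset.range (m / d), (p ^ d) ^ i % 2) % 2 := Finset.sum_nat_mod _ _ _
      _ = (∑ _i ∈ Finset.range (m / d), 1) % 2 := by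
          refine congrArg (· % 2) (Finset.sum_congr rfl fun i _ => ?_)
          exact Nat.odd_iff.mp ((hpo.pow).pow)
      _ = (m / d) % 2 := by simp
      _ = 1 := Nat.odd_iff.mp hf_odd
  -- divisibility facts
  have hgk : p ^ d - 1 ∣ p ^ k - 1 := by
    have hpk : (p ^ d) ^ (k / d) = p ^ k := by rw [← pow_mul, Nat.mul_div_cancel' hdk]
    simpa [hpk] using Nat.sub_dvd_pow_sub_pow (p ^ d) 1 (k / d)
  have hg2 : (p ^ d - 1) * 2 ∣ p ^ k - 1 := by
    obtain ⟨t, ht⟩ := he_even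
    have hk2 : k = 2 * d * t := by
      have h1 : d * (k / d) = k := Nat.mul_div_cancel' hdk
      rw [ht] at h1
      rw [← h1]; ring
    have h1 : p ^ (2 * d) - 1 ∣ p ^ k - 1 := by
      have hpk : (p ^ (2 * d)) ^ t = p ^ k := by rw [← pow_mul, ← hk2]
      simpa [hpk] using Nat.sub_dvd_pow_sub_pow (p ^ (2 * d)) 1 t
    refine dvd_trans ?_ h1
    rw [sq_nat p d hp.one_le]
    exact Nat.mul_dvd_mul_left _ ((hpo.pow).add_one.two_dvd)
  have hgN2 : p ^ d - 1 ∣ (p ^ k - 1) / 2 := by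
    rw [Nat.dvd_div_iff_mul_dvd h2k, mul_comm]
    exact hg2
  -- x^(p^m-1) = 1 for nonzero x
  have hu1 : ∀ w : F, w ≠ 0 → w ^ (p ^ m - 1) = 1 := by
    intro w hw
    rw [← hF]
    exact FiniteField.pow_card_sub_one_eq_one w hw
  have hcancel : ∀ (w : F) (a : ℕ), w ≠ 0 → p ^ m - 1 ∣ a → w ^ a = 1 := by
    rintro w a hw ⟨t, rfl⟩
    rw [pow_mul, hu1 w hw, one_pow]
  -- the z-part forces z = 0
  have hzpart : ∀ x z : F, x ≠ 0 →
      x ^ (p ^ k - 1) * z + (π : F) ^ ((p ^ k - 1) / 2) * z ^ p ^ k = 0 → z = 0 := by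
    intro x z hx hz
    by_contra hz0
    have hzp : z ^ p ^ k = z ^ (p ^ k - 1) * z := by
      rw [← pow_succ]
      congr 1
      have := hppos k
      omega
    have h1 : (x ^ (p ^ k - 1) + (π : F) ^ ((p ^ k - 1) / 2) * z ^ (p ^ k - 1)) * z = 0 := by
      rw [add_mul, mul_assoc, ← hzp]
      exact hz
    have h2 : x ^ (p ^ k - 1) = -((π : F) ^ ((p ^ k - 1) / 2) * z ^ (p ^ k - 1)) := by
      rcases mul_eq_zero.mp h1 with h | h
      · exact eq_neg_of_add_eq_zero_left h
      · exact absurd h hz0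
    have hxs : (x ^ (p ^ k - 1)) ^ s = 1 := by
      rw [← pow_mul]
      refine hcancel x _ hx ?_
      obtain ⟨w, hw⟩ := hgk
      exact ⟨w, by rw [hgeom, hw]; ring⟩
    have hzs : (z ^ (p ^ k - 1)) ^ s = 1 := by
      rw [← pow_mul]
      refine hcancel z _ hz0 ?_
      obtain ⟨w, hw⟩ := hgk
      exact ⟨w, by rw [hgeom, hw]; ring⟩
    have hps : ((π : F) ^ ((p ^ k - 1) / 2)) ^ s = 1 := by
      rw [← pow_mul]
      refine hcancel _ _ π.ne_zero ?_
      obtain ⟨w, hw⟩ := hgN2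
      exact ⟨w, by rw [hgeom, hw]; ring⟩
    have hcontr : (1 : F) = -1 := by
      calc (1 : F) = (x ^ (p ^ k - 1)) ^ s := hxs.symm
        _ = (-((π : F) ^ ((p ^ k - 1) / 2) * z ^ (p ^ k - 1))) ^ s := by rw [h2]
        _ = (-1 : F) ^ s * (((π : F) ^ ((p ^ k - 1) / 2)) ^ s * ((z ^ (p ^ k - 1)) ^ s)) := by
            rw [neg_eq_neg_one_mul, mul_pow, mul_pow]
        _ = -1 := by rw [hps, hzs, Odd.neg_one_pow hs_odd]; ring
    have h20 : (2 : F) = 0 := by linear_combination hcontr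
    have := (CharP.cast_eq_zero_iff F p 2).mp (by exact_mod_cast h20)
    have := Nat.le_of_dvd (by norm_num) this
    omega
  -- predicate simplification
  have hiff : ∀ x y z : F,
      (x ≠ 0 ∧ (x ^ (p ^ k - 1) * y - y ^ p ^ k) ^ 2 =
        (π : F) * (x ^ (p ^ k - 1) * z + (π : F) ^ ((p ^ k - 1) / 2) * z ^ p ^ k) ^ 2)
      ↔ (x ≠ 0 ∧ y ^ p ^ k = x ^ (p ^ k - 1) * y ∧ z = 0) := by
    intro x y z
    constructor
    · rintro ⟨hx, h⟩
      have hB : x ^ (p ^ k - 1) * z + (π : F) ^ ((p ^ k - 1) / 2) * z ^ p ^ k = 0 := by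
        by_contra hB
        apply hnonsq ((x ^ (p ^ k - 1) * y - y ^ p ^ k) /
          (x ^ (p ^ k - 1) * z + (π : F) ^ ((p ^ k - 1) / 2) * z ^ p ^ k))
        rw [div_pow, h, mul_div_assoc, div_self (pow_ne_zero 2 hB), mul_one]
      have hz0 : z = 0 := hzpart x z hx hB
      have hA : (x ^ (p ^ k - 1) * y - y ^ p ^ k) ^ 2 = 0 := by rw [h, hB]; ring
      have hA0 : x ^ (p ^ k - 1) * y - y ^ p ^ k = 0 := by
        exact pow_eq_zero_iff (by norm_num) |>.mp hA
      exact ⟨hx, (sub_eq_zero.mp hA0).symm, hz0⟩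
    · rintro ⟨hx, hy, rfl⟩
      refine ⟨hx, ?_⟩
      have hzk : (0 : F) ^ p ^ k = 0 := zero_pow (by positivity)
      rw [hzk, hy]
      ring
  -- the fixed-point subtype
  have hUiff : ∀ u : F, u ^ p ^ k = u ↔ u ^ p ^ d = u := by
    intro u
    constructor
    · intro h
      have hum : u ^ p ^ m = u := by
        rw [← hF]; exact FiniteField.pow_card u
      exact hgcdfix m k u hum h
    · intro h
      have := hmulfix d (k / d) u h
      rwa [Nat.mul_div_cancel' hdk] at this
  -- equivalences
  have e0 : {t : F × F × F // t.1 ≠ 0 ∧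
        (t.1 ^ (p ^ k - 1) * t.2.1 - t.2.1 ^ p ^ k) ^ 2 =
          (π : F) * (t.1 ^ (p ^ k - 1) * t.2.2
            + (π : F) ^ ((p ^ k - 1) / 2) * t.2.2 ^ p ^ k) ^ 2} ≃
      {t : F × F × F // t.1 ≠ 0 ∧ t.2.1 ^ p ^ k = t.1 ^ (p ^ k - 1) * t.2.1 ∧ t.2.2 = 0} :=
    Equiv.subtypeEquivRight (fun t => hiff t.1 t.2.1 t.2.2)
  have hxpk : ∀ x : F, x ^ p ^ k = x ^ (p ^ k - 1) * x := by
    intro x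
    rw [← pow_succ]
    congr 1
    have := hppos k
    omega
  have e1 : {t : F × F × F // t.1 ≠ 0 ∧ t.2.1 ^ p ^ k = t.1 ^ (p ^ k - 1) * t.2.1 ∧ t.2.2 = 0} ≃
      Fˣ × {u : F // u ^ p ^ k = u} :=
  { toFun := fun t => (Units.mk0 t.1.1 t.2.1, ⟨t.1.2.1 / t.1.1, by
      obtain ⟨⟨x, y, z⟩, hx, hy, hz⟩ := t
      show (y / x) ^ p ^ k = y / x
      rw [div_pow, hy, hxpk x, mul_div_mul_left _ _ (pow_ne_zero _ hx)]⟩)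
    invFun := fun w => ⟨((w.1 : F), (w.2 : F) * (w.1 : F), 0), w.1.ne_zero, by
      obtain ⟨x, u, hu⟩ := w
      show ((u : F) * (x : F)) ^ p ^ k = (x : F) ^ (p ^ k - 1) * ((u : F) * (x : F))
      rw [mul_pow, hu, hxpk (x : F)]
      ring, rfl⟩
    left_inv := by
      rintro ⟨⟨x, y, z⟩, hx, hy, hz⟩
      obtain rfl : z = 0 := hz
      apply Subtype.ext
      simp only [Units.val_mk0]
      rw [div_mul_cancel₀ _ hx]
    right_inv := by
      rintro ⟨x, u, hu⟩
      have h1 : Units.mk0 ((x : F)) (x.ne_zero) = x := Units.ext rfl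
      have h2 : (u : F) * (x : F) / (x : F) = u := mul_div_cancel_right₀ _ x.ne_zero
      exact Prod.ext h1 (Subtype.ext (by simpa using h2)) }
  have eU : {u : F // u ^ p ^ k = u} ≃ {u : F // u ^ p ^ d = u} :=
    Equiv.subtypeEquivRight hUiff
  haveI : NeZero (p ^ d - 1) := ⟨by omega⟩
  have hpdpos : 0 < p ^ d := hppos d
  have e2 : {u : F // u ^ p ^ d = u} ≃ Option (rootsOfUnity (p ^ d - 1) F) :=
  { toFun := fun u => if h : (u : F) = 0 then none else some ⟨Units.mk0 u.1 h, by
      rw [mem_rootsOfUnity]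
      apply Units.ext
      rw [Units.val_pow_eq_pow_val, Units.val_mk0, Units.val_one]
      have hu := u.2
      have h1 : u.1 ^ (p ^ d - 1) * u.1 = 1 * u.1 := by
        rw [one_mul, ← pow_succ]
        have : p ^ d - 1 + 1 = p ^ d := by omega
        rw [this, hu]
      exact mul_right_cancel₀ h h1⟩
    invFun := fun o => o.elim ⟨0, by
      show (0 : F) ^ p ^ d = 0
      exact zero_pow (by positivity)⟩
      (fun w => ⟨((w : Fˣ) : F), by
        have hw : ((w : Fˣ) : F) ^ (p ^ d - 1) = 1 := by
          have := (mem_rootsOfUnity _ _).mp w.2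
          calc ((w : Fˣ) : F) ^ (p ^ d - 1) = (((w : Fˣ) ^ (p ^ d - 1) : Fˣ) : F) := by
                rw [Units.val_pow_eq_pow_val]
            _ = 1 := by rw [this, Units.val_one]
        calc ((w : Fˣ) : F) ^ p ^ d = ((w : Fˣ) : F) ^ (p ^ d - 1) * ((w : Fˣ) : F) := by
              rw [← pow_succ]
              congr 1
              omega
          _ = ((w : Fˣ) : F) := by rw [hw, one_mul]⟩)
    left_inv := by
      rintro ⟨u, hu⟩
      dsimp only
      split_ifs with h
      · exact Subtype.ext h.symm
      · rfl
    right_inv := by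
      rintro (_ | w)
      · simp
      · have hw : ((w : Fˣ) : F) ≠ 0 := (w : Fˣ).ne_zero
        simp only [Option.elim, dif_neg hw]
        congr 1
        refine (dif_neg hw).trans ?_
        congr 1
        apply Subtype.ext
        exact Units.ext rfl }
  -- order of π^s and card of roots of unity
  have hζord : orderOf (π ^ s) = p ^ d - 1 := by
    rw [orderOf_pow, hord, Nat.gcd_eq_right hsdvd, hgeom,
      Nat.mul_div_cancel _ (Nat.pos_of_ne_zero hs0)]
  have hprim : IsPrimitiveRoot (π ^ s) (p ^ d - 1) := hζord ▸ IsPrimitiveRoot.orderOf (π ^ s)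
  have hcardR : Fintype.card (rootsOfUnity (p ^ d - 1) F) = p ^ d - 1 :=
    by rw [← Nat.card_eq_fintype_card]; exact hprim.card_rootsOfUnity'
  -- put everything together
  rw [Nat.card_congr (e0.trans e1), Nat.card_prod, hcardU,
    Nat.card_congr (eU.trans e2), Finite.card_option, Nat.card_eq_fintype_card, hcardR]
  have : p ^ d - 1 + 1 = p ^ d := by omega
  rw [this, mul_comm]
end

section
/- Let p be an odd prime, m, k positive integers with 1 ≤ v₂(m) < v₂(k), and π a primitive element of F_{p^m}. Then the number of triples (x,y,z) with x ∈ F_{p^m}* and y,z ∈ F_{p^m} satisfying (x^{p^k−1}y + π^{(p^k−1)/2} y^{p^k})² + (x^{p^k−1}z + π^{(p^k−1)/2} z^{p^k})² = 0 equals (2p^m − 1)(p^m − 1). -/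
-- v2 of a^n - 1 equals v2 of a - 1 for odd a, odd n : we only need factorization
lemma geom_fac (a n : ℕ) (ha : 1 ≤ a) :
    a ^ n - 1 = (a - 1) * ∑ i ∈ Finset.range n, a ^ i := by
  have h1 : 1 ≤ a ^ n := Nat.one_le_pow _ _ ha
  have := geom_sum_mul (a : ℤ) n
  zify [ha, h1]
  linarith [this]

lemma sum_odd (a n : ℕ) (ha : Odd a) (hn : Odd n) :
    Odd (∑ i ∈ Finset.range n, a ^ i) := by
  rw [Nat.odd_iff, Finset.sum_nat_mod]
  have : ∀ i ∈ Finset.range n, a ^ i % 2 = 1 := by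
    intro i _
    rw [← Nat.odd_iff]; exact ha.pow
  rw [Finset.sum_congr rfl this]
  simp [Nat.odd_iff.mp hn]

lemma key2adic {p m k : ℕ} (hpo : Odd p) (hp2 : 3 ≤ p) (hm : 0 < m) (hk : 0 < k)
    (hv2 : padicValNat 2 m < padicValNat 2 k) :
    ∃ s, p ^ k - 1 = 2 ^ (padicValNat 2 (p ^ m - 1) + 1) * s := by
  set t := padicValNat 2 m with ht
  set r := p ^ (2 ^ t) with hr
  have hr3 : 3 ≤ r := le_trans hp2 (Nat.le_self_pow (Nat.pos_of_ne_zero (by positivity)).ne' p)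
  have hro : Odd r := hpo.pow
  -- m = 2^t * m', m' odd
  obtain ⟨m', hm'⟩ : 2 ^ t ∣ m := pow_padicValNat_dvd
  have hm'odd : Odd m' := by
    have h := Nat.not_dvd_ordCompl Nat.prime_two hm.ne'
    rw [Nat.factorization_def m Nat.prime_two] at h
    rw [Nat.odd_iff, ← Nat.not_even_iff]
    intro hc
    apply h
    have h3 : m / 2 ^ t = m' := by
      rw [hm']; exact Nat.mul_div_cancel_left _ (by positivity)
    rw [← ht, h3]; exact hc.two_dvd
  -- now the valuation of p^m - 1
  have hfac : p ^ m - 1 = (r - 1) * ∑ i ∈ Finset.range m', r ^ i := by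
    rw [hm', pow_mul, ← hr]
    exact geom_fac r m' (by omega)
  set S := ∑ i ∈ Finset.range m', r ^ i with hS
  have hSodd : Odd S := sum_odd r m' hro hm'odd
  have hSne : S ≠ 0 := by rintro h0; rw [h0] at hSodd; simp [Nat.odd_iff] at hSodd
  have hrne : r - 1 ≠ 0 := by omega
  set e := padicValNat 2 (p ^ m - 1) with he
  have hSval : padicValNat 2 S = 0 :=
    padicValNat.eq_zero_of_not_dvd (by
      rw [Nat.two_dvd_ne_zero, ← Nat.odd_iff]; exact hSodd)
  have hev : e = padicValNat 2 (r - 1) := by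
    rw [he, hfac, padicValNat.mul hrne hSne, hSval, add_zero]
  -- 2^(e+1) divides r^2 - 1
  have hd1 : 2 ^ e ∣ r - 1 := by rw [hev]; exact pow_padicValNat_dvd
  have hd2 : (2 : ℕ) ∣ r + 1 := by
    obtain ⟨j, hj⟩ := hro; omega
  have hsq : (r - 1) * (r + 1) = r ^ 2 - 1 := by
    have h1 : 1 ≤ r := by omega
    have h2 : 1 ≤ r ^ 2 := Nat.one_le_pow _ _ (by omega)
    zify [h1, h2]; ring
  have hd3 : 2 ^ (e + 1) ∣ r ^ 2 - 1 := by
    rw [← hsq, pow_succ]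
    exact mul_dvd_mul hd1 hd2
  -- r^2 - 1 divides p^k - 1
  obtain ⟨k', hk'⟩ : 2 ^ (t + 1) ∣ k := by
    calc 2 ^ (t + 1) ∣ 2 ^ padicValNat 2 k := pow_dvd_pow 2 hv2
    _ ∣ k := pow_padicValNat_dvd
  have hd4 : r ^ 2 - 1 ∣ p ^ k - 1 := by
    have : r ^ 2 = p ^ 2 ^ (t + 1) := by
      rw [hr, ← pow_mul, ← pow_succ]
    rw [this, hk', pow_mul]
    simpa using Nat.sub_dvd_pow_sub_pow (p ^ 2 ^ (t + 1)) 1 k'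
  exact hd3.trans hd4

theorem stmt_11 (p m k : ℕ) (hp : p.Prime) (hpo : Odd p) (hm : 0 < m) (hk : 0 < k)
    (hv1 : 1 ≤ padicValNat 2 m) (hv2 : padicValNat 2 m < padicValNat 2 k)
    (F : Type*) [Field F] [Fintype F] (hF : Fintype.card F = p ^ m)
    (π : Fˣ) (hπ : ∀ x : Fˣ, x ∈ Subgroup.zpowers π) :
    Nat.card {t : F × F × F // t.1 ≠ 0 ∧
        (t.1 ^ (p ^ k - 1) * t.2.1
            + (π : F) ^ ((p ^ k - 1) / 2) * t.2.1 ^ (p ^ k)) ^ 2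
          + (t.1 ^ (p ^ k - 1) * t.2.2
            + (π : F) ^ ((p ^ k - 1) / 2) * t.2.2 ^ (p ^ k)) ^ 2 = 0} =
      (2 * p ^ m - 1) * (p ^ m - 1) := by
  classical
  have hp3 : 3 ≤ p := by
    have := hp.two_le; have := Nat.odd_iff.mp hpo; omega
  -- characteristic of F is p
  haveI hpf : Fact p.Prime := ⟨hp⟩
  have hchar : CharP F p := by
    obtain ⟨r, hr⟩ := CharP.exists F
    obtain ⟨n, hrp, hcard⟩ := @FiniteField.card F _ _ r hr
    have hpr : p = r := by
      have h1 : p ∣ r ^ (n : ℕ) := by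
        rw [← hcard, hF]; exact dvd_pow_self p hm.ne'
      exact (Nat.prime_dvd_prime_iff_eq hp hrp).mp (hp.dvd_of_dvd_pow h1)
    rwa [hpr]
  haveI := hchar
  -- basic cardinalities
  set q := p ^ m with hq
  have hq3 : 3 ≤ q := le_trans hp3 (Nat.le_self_pow hm.ne' p)
  have hqodd : Odd q := hpo.pow
  have hcu : Fintype.card Fˣ = q - 1 := by rw [Fintype.card_units, hF]
  have hu1 : ∀ u : Fˣ, u ^ (q - 1) = 1 := fun u => by
    rw [← hcu]; exact pow_card_eq_one
  -- -1 ≠ 1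
  have hne : (-1 : F) ≠ 1 := by
    haveI : Fact (2 < p) := ⟨by omega⟩
    exact CharP.neg_one_ne_one F p
  -- square root of -1
  obtain ⟨i, hi⟩ : ∃ i : F, i ^ 2 = -1 := by
    have hsq : IsSquare (-1 : F) := by
      rw [FiniteField.isSquare_neg_one_iff, hF]
      obtain ⟨m₂, hm₂⟩ : 2 ∣ m := dvd_trans (dvd_pow_self 2 (by omega : padicValNat 2 m ≠ 0)) pow_padicValNat_dvd
      have : p ^ m % 4 = 1 := by
        rw [hm₂, mul_comm, pow_mul]
        have : Odd (p ^ m₂) := hpo.pow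
        obtain ⟨j, hj⟩ := this
        rw [hj]; ring_nf; omega
      omega
    obtain ⟨a, ha⟩ := hsq
    exact ⟨a, by rw [sq, ← ha]⟩
  -- divisibility setup
  set e := padicValNat 2 (q - 1) with he
  set N := (q - 1) / 2 ^ e with hN
  have hqm1 : q - 1 = 2 ^ e * N := by
    rw [hN]
    rw [mul_comm]
    exact (Nat.div_mul_cancel (he ▸ pow_padicValNat_dvd)).symm
  have hNodd : Odd N := by
    have h := Nat.not_dvd_ordCompl Nat.prime_two (show q - 1 ≠ 0 by omega)
    rw [Nat.factorization_def _ Nat.prime_two] at h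
    rw [← Nat.not_even_iff_odd, even_iff_two_dvd]
    exact h
  obtain ⟨s, hs⟩ := key2adic hpo hp3 hm hk hv2
  rw [← hq, ← he] at hs
  -- powers that collapse to 1
  have hpk1 : 1 ≤ p ^ k := Nat.one_le_pow _ _ (by omega)
  have hA : ∀ u : Fˣ, u ^ ((p ^ k - 1) * N) = 1 := by
    intro u
    have : (p ^ k - 1) * N = (q - 1) * (2 * s) := by
      rw [hs, hqm1]; ring
    rw [this, pow_mul, hu1, one_pow]
  have hC : (π ^ (((p ^ k - 1) / 2) * N)) = 1 := by
    have : ((p ^ k - 1) / 2) * N = (q - 1) * s := by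
      have h2 : (p ^ k - 1) / 2 = 2 ^ e * s := by
        rw [hs, pow_succ, show 2 ^ e * 2 * s = 2 * (2 ^ e * s) by ring]
        exact Nat.mul_div_cancel_left _ (by norm_num)
      rw [h2, hqm1]; ring
    rw [this, pow_mul, hu1, one_pow]
  set c : F := (π : F) ^ ((p ^ k - 1) / 2) with hc
  have hcp : c ^ N = 1 := by
    have := congrArg Units.val hC
    rw [hc, ← pow_mul]
    simpa using this
  -- trivial kernel
  have hker : ∀ x w : F, x ≠ 0 →
      x ^ (p ^ k - 1) * w + c * w ^ (p ^ k) = 0 → w = 0 := by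
    intro x w hx hw0
    by_contra hw
    have hpk : p ^ k = (p ^ k - 1) + 1 := by omega
    rw [hpk, pow_succ] at hw0
    simp only [Nat.add_sub_cancel] at hw0
    have h1 : (x ^ (p ^ k - 1) + c * w ^ (p ^ k - 1)) * w = 0 := by
      linear_combination hw0
    rcases mul_eq_zero.mp h1 with h | h
    swap
    · exact hw h
    have h2 : c * w ^ (p ^ k - 1) = -(x ^ (p ^ k - 1)) := by linear_combination h
    have hxp : x ^ ((p ^ k - 1) * N) = 1 := by
      have := congrArg Units.val (hA (Units.mk0 x hx))
      simpa using this
    have hwp : w ^ ((p ^ k - 1) * N) = 1 := by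
      have := congrArg Units.val (hA (Units.mk0 w hw))
      simpa using this
    have hfin : (1 : F) = -1 := by
      calc (1 : F) = c ^ N * w ^ ((p ^ k - 1) * N) := by rw [hcp, hwp, one_mul]
      _ = (c * w ^ (p ^ k - 1)) ^ N := by rw [mul_pow, pow_mul]
      _ = (-(x ^ (p ^ k - 1))) ^ N := by rw [h2]
      _ = -(x ^ ((p ^ k - 1) * N)) := by rw [hNodd.neg_pow, pow_mul]
      _ = -1 := by rw [hxp]
    exact hne hfin.symm
  -- bijectivity of the linear map
  have hLbij : ∀ x : F, x ≠ 0 →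
      Function.Bijective (fun y : F => x ^ (p ^ k - 1) * y + c * y ^ (p ^ k)) := by
    intro x hx
    rw [← Finite.injective_iff_bijective]
    intro y y' hyy
    simp only at hyy
    have hsub : x ^ (p ^ k - 1) * (y - y') + c * (y - y') ^ (p ^ k) = 0 := by
      rw [sub_pow_char_pow]
      linear_combination hyy
    exact sub_eq_zero.mp (hker x (y - y') hx hsub)
  -- -1 is not 0, i is not 0, 2 is not 0
  have hi0 : i ≠ 0 := by
    intro h0
    have h1 : (-1 : F) = 0 := by rw [← hi, h0]; ring
    exact one_ne_zero (by linear_combination -h1)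
  have h20 : (2 : F) ≠ 0 := by
    intro h0
    apply hne
    have : (1 : F) + 1 = 0 := by rw [← h0]; norm_num
    linear_combination -this
  -- count of pairs
  have hpair : Nat.card {t : F × F // t.1 ^ 2 + t.2 ^ 2 = 0} = 2 * q - 1 := by
    have hiff : ∀ t : F × F, t.1 ^ 2 + t.2 ^ 2 = 0 ↔
        (t.1 = i * t.2 ∨ t.1 = -i * t.2) := by
      intro t
      constructor
      · intro h
        have hfac2 : (t.1 - i * t.2) * (t.1 + i * t.2) = 0 := by
          linear_combination h - t.2 ^ 2 * hi
        rcases mul_eq_zero.mp hfac2 with h' | h'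
        · exact Or.inl (sub_eq_zero.mp h')
        · refine Or.inr ?_
          rw [neg_mul]
          exact eq_neg_of_add_eq_zero_left h'
      · rintro (h | h) <;> rw [h] <;> linear_combination t.2 ^ 2 * hi
    rw [Nat.card_eq_fintype_card, Fintype.card_subtype]
    have hsplit : (Finset.univ.filter fun t : F × F => t.1 ^ 2 + t.2 ^ 2 = 0) =
        (Finset.univ.filter fun t : F × F => t.1 = i * t.2) ∪
        (Finset.univ.filter fun t : F × F => t.1 = -i * t.2) := by
      rw [← Finset.filter_or]
      exact Finset.filter_congr fun t _ => by rw [hiff t]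
    have hg : ∀ j : F, (Finset.univ.filter fun t : F × F => t.1 = j * t.2).card = q := by
      intro j
      rw [← hF, ← Finset.card_univ]
      apply Finset.card_bij' (fun t _ => t.2) (fun v _ => (j * v, v))
      · intro a ha; exact Finset.mem_univ _
      · intro a ha; simp
      · intro a ha
        simp only [Finset.mem_filter] at ha
        exact Prod.ext ha.2.symm rfl
      · intro a _; rfl
    have hint : ((Finset.univ.filter fun t : F × F => t.1 = i * t.2) ∩
        (Finset.univ.filter fun t : F × F => t.1 = -i * t.2)) = {((0 : F), (0 : F))} := by
      ext t
      simp only [Finset.mem_inter, Finset.mem_filter, Finset.mem_univ, true_and,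
        Finset.mem_singleton]
      constructor
      · rintro ⟨h1, h2⟩
        have hv : t.2 = 0 := by
          have h3 : (2 : F) * (i * t.2) = 0 := by
            linear_combination h2 - h1
          rcases mul_eq_zero.mp h3 with h4 | h4
          · exact absurd h4 h20
          · rcases mul_eq_zero.mp h4 with h5 | h5
            · exact absurd h5 hi0
            · exact h5
        have hu : t.1 = 0 := by rw [h1, hv, mul_zero]
        exact Prod.ext hu hv
      · rintro rfl
        constructor <;> simp
    have hcard := Finset.card_union_add_card_inter
      (Finset.univ.filter fun t : F × F => t.1 = i * t.2)
      (Finset.univ.filter fun t : F × F => t.1 = -i * t.2)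
    rw [hint, hg i, hg (-i)] at hcard
    rw [hsplit]
    simp only [Finset.card_singleton] at hcard
    omega
  -- main bijection
  have hmain : Nat.card {t : F × F × F // t.1 ≠ 0 ∧
      (t.1 ^ (p ^ k - 1) * t.2.1 + c * t.2.1 ^ p ^ k) ^ 2
        + (t.1 ^ (p ^ k - 1) * t.2.2 + c * t.2.2 ^ p ^ k) ^ 2 = 0}
      = Nat.card ({x : F // x ≠ 0} × {t : F × F // t.1 ^ 2 + t.2 ^ 2 = 0}) := by
    have hbij : Function.Bijective (fun t : {t : F × F × F // t.1 ≠ 0 ∧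
        (t.1 ^ (p ^ k - 1) * t.2.1 + c * t.2.1 ^ p ^ k) ^ 2
          + (t.1 ^ (p ^ k - 1) * t.2.2 + c * t.2.2 ^ p ^ k) ^ 2 = 0} =>
        ((⟨t.val.1, t.prop.1⟩ : {x : F // x ≠ 0}),
        (⟨(t.val.1 ^ (p ^ k - 1) * t.val.2.1 + c * t.val.2.1 ^ p ^ k,
          t.val.1 ^ (p ^ k - 1) * t.val.2.2 + c * t.val.2.2 ^ p ^ k), t.prop.2⟩ :
          {t : F × F // t.1 ^ 2 + t.2 ^ 2 = 0}))) := by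
      constructor
      · rintro ⟨⟨x, y, z⟩, hx, hE⟩ ⟨⟨x', y', z'⟩, hx', hE'⟩ hEq
        simp only [Prod.mk.injEq, Subtype.mk.injEq] at hEq
        obtain ⟨h1, h2, h3⟩ := hEq
        subst h1
        have hy : y = y' := (hLbij x hx).injective h2
        have hz : z = z' := (hLbij x hx).injective h3
        subst hy; subst hz; rfl
      · rintro ⟨⟨x, hx⟩, ⟨⟨u, v⟩, huv⟩⟩
        obtain ⟨y, hy⟩ := (hLbij x hx).surjective u
        obtain ⟨z, hz⟩ := (hLbij x hx).surjective v
        simp only at hy hz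
        refine ⟨⟨⟨x, y, z⟩, hx, by rw [hy, hz]; exact huv⟩, ?_⟩
        simp [hy, hz]
    exact Nat.card_eq_of_bijective _ hbij
  rw [hmain, Nat.card_prod, hpair]
  have hx0 : Nat.card {x : F // x ≠ 0} = q - 1 := by
    rw [← Nat.card_congr unitsEquivNeZero, Nat.card_eq_fintype_card, hcu]
  rw [hx0]
  exact Nat.mul_comm _ _
end

section
/- Let p be an odd prime, m, k positive integers with d = gcd(m,k). If v₂(k) < v₂(m), then p^d − 1 divides (p^m − 1)/2 but p^d − 1 does not divide (p^k − 1)/2; consequently p^d − 1 does not divide (p^k − 1)/2 + (p^m − 1)/2. -/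
lemma geom_fact (q s : ℕ) (h1 : 1 ≤ q) :
    q ^ s - 1 = (q - 1) * ∑ i ∈ Finset.range s, q ^ i := by
  have : ((q : ℤ) - 1) * ∑ i ∈ Finset.range s, (q : ℤ) ^ i = (q : ℤ) ^ s - 1 := by
    rw [mul_comm]; exact geom_sum_mul _ _
  have h2 : (1:ℕ) ≤ q ^ s := Nat.one_le_pow _ _ h1
  zify [h1, h2]
  rw [← this]

lemma sum_odd_s12 (q s : ℕ) (hq : Odd q) (hs : Odd s) :
    Odd (∑ i ∈ Finset.range s, q ^ i) := by
  rw [Nat.odd_iff, Finset.sum_nat_mod]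
  have : ∀ i ∈ Finset.range s, q ^ i % 2 = 1 := fun i _ => by
    rw [← Nat.odd_iff]; exact hq.pow
  rw [Finset.sum_congr rfl this]
  simpa using Nat.odd_iff.mp hs

lemma not_dvd_aux (q s : ℕ) (hq : Odd q) (h1 : 1 < q) (hs : Odd s) :
    ¬ 2 * (q - 1) ∣ q ^ s - 1 := by
  rw [geom_fact q s h1.le]
  rintro ⟨c, hc⟩
  have hq0 : q - 1 ≠ 0 := by omega
  have : ∑ i ∈ Finset.range s, q ^ i = 2 * c := by
    have := hc
    rw [mul_comm 2 (q-1), mul_assoc] at this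
    exact Nat.eq_of_mul_eq_mul_left (by omega) this
  have ho := sum_odd_s12 q s hq hs
  rw [this] at ho
  exact (Nat.not_odd_iff_even.mpr ⟨c, by ring⟩) ho

theorem stmt_12 (p m k : ℕ) (hp : p.Prime) (hpo : Odd p) (hm : 0 < m) (hk : 0 < k)
    (hv : padicValNat 2 k < padicValNat 2 m) :
    (p ^ Nat.gcd m k - 1) ∣ (p ^ m - 1) / 2 ∧
    ¬ (p ^ Nat.gcd m k - 1) ∣ (p ^ k - 1) / 2 ∧
    ¬ (p ^ Nat.gcd m k - 1) ∣ ((p ^ k - 1) / 2 + (p ^ m - 1) / 2) := by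
  have : Fact (Nat.Prime 2) := ⟨Nat.prime_two⟩
  set d := Nat.gcd m k with hd
  have hd0 : 0 < d := Nat.gcd_pos_of_pos_left _ hm
  have hp1 : 1 < p := hp.one_lt
  have hq1 : 1 < p ^ d := Nat.one_lt_pow (by omega) hp1
  have hqodd : Odd (p ^ d) := hpo.pow
  -- valuation of gcd
  have hm0 : m ≠ 0 := hm.ne'
  have hk0 : k ≠ 0 := hk.ne'
  have hvd : padicValNat 2 d = padicValNat 2 k := by
    have := Nat.factorization_gcd hm0 hk0
    have h2 : (Nat.gcd m k).factorization 2 = min (m.factorization 2) (k.factorization 2) := by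
      rw [this]; simp [Finsupp.inf_apply]
    rw [Nat.factorization_def _ Nat.prime_two, Nat.factorization_def _ Nat.prime_two,
      Nat.factorization_def _ Nat.prime_two] at h2
    rw [← hd] at h2
    omega
  obtain ⟨s, hs⟩ : d ∣ k := Nat.gcd_dvd_right m k
  obtain ⟨t, ht⟩ : d ∣ m := Nat.gcd_dvd_left m k
  have hs0 : s ≠ 0 := by rintro rfl; simp at hs; omega
  have ht0 : t ≠ 0 := by rintro rfl; simp at ht; omega
  have hvs : padicValNat 2 s = 0 := by
    have := padicValNat.mul (p := 2) (a := d) (b := s) (by omega) hs0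
    rw [← hs] at this; omega
  have hvt : 0 < padicValNat 2 t := by
    have := padicValNat.mul (p := 2) (a := d) (b := t) (by omega) ht0
    rw [← ht] at this; omega
  have hsodd : Odd s := by
    have h2 : ¬ 2 ∣ s := fun h =>
      by have := one_le_padicValNat_of_dvd hs0 h; omega
    rw [Nat.odd_iff]; omega
  have hteven : 2 ∣ t := dvd_of_one_le_padicValNat hvt
  obtain ⟨w, hw⟩ := hteven
  -- Claim 1
  have c1 : (p ^ d - 1) ∣ (p ^ m - 1) / 2 := by
    have hdvd : p ^ (2 * d) - 1 ∣ p ^ m - 1 := by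
      have : p ^ m = (p ^ (2 * d)) ^ w := by
        rw [← pow_mul]; congr 1; rw [ht, hw]; ring
      rw [this]
      simpa using Nat.sub_dvd_pow_sub_pow (p ^ (2 * d)) 1 w
    obtain ⟨u, hu⟩ := hdvd
    obtain ⟨r, hr⟩ : 2 ∣ p ^ d + 1 := by
      obtain ⟨a, ha⟩ := hqodd; omega
    have hfac : p ^ (2 * d) - 1 = (p ^ d - 1) * (p ^ d + 1) := by
      have : p ^ (2 * d) = p ^ d * p ^ d := by rw [two_mul, pow_add]
      rw [this]
      have h1 : 1 ≤ p ^ d := hq1.le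
      have h2 : 1 ≤ p ^ d * p ^ d := Nat.one_le_iff_ne_zero.mpr (by positivity)
      zify [h1, h2]; ring
    refine ⟨r * u, ?_⟩
    have : p ^ m - 1 = 2 * ((p ^ d - 1) * (r * u)) := by
      rw [hu, hfac, hr]; ring
    omega
  refine ⟨c1, ?_, ?_⟩
  -- Claim 2
  · intro hdvd
    have hpk1 : 1 ≤ p ^ k := Nat.one_le_pow _ _ (by omega)
    have heven : 2 ∣ p ^ k - 1 := by
      obtain ⟨a, ha⟩ : Odd (p ^ k) := hpo.pow
      omega
    obtain ⟨c, hc⟩ := hdvd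
    have h2 : 2 * (p ^ d - 1) ∣ p ^ k - 1 := by
      refine ⟨c, ?_⟩
      obtain ⟨e, he⟩ := heven
      rw [he] at hc ⊢
      rw [Nat.mul_div_cancel_left _ (by norm_num)] at hc
      rw [hc]; ring
    have : p ^ k = (p ^ d) ^ s := by rw [← pow_mul, ← hs]
    rw [this] at h2
    exact not_dvd_aux (p ^ d) s hqodd hq1 hsodd h2
  -- Claim 3
  · intro hdvd
    have := (Nat.dvd_add_right c1).mp (by rwa [Nat.add_comm] at hdvd)
    -- this : divides (p^k-1)/2, contradiction as in claim 2
    have hpk1 : 1 ≤ p ^ k := Nat.one_le_pow _ _ (by omega)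
    have heven : 2 ∣ p ^ k - 1 := by
      obtain ⟨a, ha⟩ : Odd (p ^ k) := hpo.pow
      omega
    obtain ⟨c, hc⟩ := this
    have h2 : 2 * (p ^ d - 1) ∣ p ^ k - 1 := by
      refine ⟨c, ?_⟩
      obtain ⟨e, he⟩ := heven
      rw [he] at hc ⊢
      rw [Nat.mul_div_cancel_left _ (by norm_num)] at hc
      rw [hc]; ring
    have hpk : p ^ k = (p ^ d) ^ s := by rw [← pow_mul, ← hs]
    rw [hpk] at h2
    exact not_dvd_aux (p ^ d) s hqodd hq1 hsodd h2
end

section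
/- Let p be an odd prime, m, k positive integers with d = gcd(m,k). If 1 ≤ v₂(m) < v₂(k), then p^d − 1 divides (p^k − 1)/2 but p^d − 1 does not divide (p^m − 1)/2. -/
open Finset in
lemma geom_sum_nat (x q : ℕ) (hx : 1 ≤ x) :
    (x - 1) * ∑ i ∈ Finset.range q, x ^ i = x ^ q - 1 := by
  induction q with
  | zero => simp
  | succ n ih =>
    rw [Finset.sum_range_succ, Nat.mul_add, ih, pow_succ]
    have hxn : 1 ≤ x ^ n := Nat.one_le_pow _ _ hx
    have h2 : (x - 1) * x ^ n = x ^ n * x - x ^ n := by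
      rw [Nat.sub_mul, one_mul, mul_comm]
    have h3 : x ^ n ≤ x ^ n * x := Nat.le_mul_of_pos_right _ (by omega)
    omega

lemma geom_sum_mod_two (x q : ℕ) (hx : Odd x) :
    (∑ i ∈ Finset.range q, x ^ i) % 2 = q % 2 := by
  induction q with
  | zero => simp
  | succ n ih =>
    rw [Finset.sum_range_succ]
    have : Odd (x ^ n) := hx.pow
    rw [Nat.odd_iff] at this
    omega

theorem stmt_13 (p m k : ℕ) (hp : p.Prime) (hpo : Odd p) (hm : 0 < m) (hk : 0 < k)
    (hv1 : 1 ≤ padicValNat 2 m) (hv2 : padicValNat 2 m < padicValNat 2 k) :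
    (p ^ Nat.gcd m k - 1) ∣ (p ^ k - 1) / 2 ∧
    ¬ (p ^ Nat.gcd m k - 1) ∣ (p ^ m - 1) / 2 := by
  set d := Nat.gcd m k with hd
  have hdm : d ∣ m := Nat.gcd_dvd_left m k
  have hdk : d ∣ k := Nat.gcd_dvd_right m k
  have hd0 : 0 < d := Nat.gcd_pos_of_pos_left k hm
  have h2 : (2 : ℕ).Prime := Nat.prime_two
  -- valuation of d is that of m
  have hvm : m.factorization 2 = padicValNat 2 m := Nat.factorization_def m h2
  have hvk : k.factorization 2 = padicValNat 2 k := Nat.factorization_def k h2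
  have hfd : d.factorization 2 = m.factorization 2 := by
    rw [hd, Nat.factorization_gcd hm.ne' hk.ne', Finsupp.inf_apply]
    omega
  -- r = m/d odd
  set r := m / d with hr
  set q := k / d with hq
  have hmr : m = d * r := (Nat.div_mul_cancel hdm).symm.trans (by ring)
  have hkq : k = d * q := (Nat.div_mul_cancel hdk).symm.trans (by ring)
  have hr0 : 0 < r := Nat.div_pos (Nat.le_of_dvd hm hdm) hd0
  have hq0 : 0 < q := Nat.div_pos (Nat.le_of_dvd hk hdk) hd0
  have hrodd : Odd r := by
    rw [Nat.odd_iff, ← Nat.two_dvd_ne_zero]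
    intro h2r
    have : r.factorization 2 ≠ 0 := by
      have := (Nat.Prime.factorization_pos_of_dvd h2 hr0.ne' h2r)
      omega
    have hfr : r.factorization 2 = m.factorization 2 - d.factorization 2 := by
      rw [hr, Nat.factorization_div hdm]; simp
    omega
  have hqeven : Even q := by
    have hfq : q.factorization 2 = k.factorization 2 - d.factorization 2 := by
      rw [hq, Nat.factorization_div hdk]; simp
    have : q.factorization 2 ≠ 0 := by omega
    have := Nat.dvd_of_factorization_pos this
    exact (even_iff_two_dvd).2 this
  have hp1 : 1 ≤ p := hp.one_lt.le
  have hpd : Odd (p ^ d) := hpo.pow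
  have hpd1 : 1 ≤ p ^ d := Nat.one_le_pow _ _ hp1
  have hpdpos : 0 < p ^ d - 1 := by
    have : 2 ≤ p := hp.two_le
    have : 2 ≤ p ^ d := le_trans this (Nat.le_self_pow hd0.ne' p)
    omega
  constructor
  · -- divisibility
    have hsum := geom_sum_nat (p ^ d) q hpd1
    have hmod := geom_sum_mod_two (p ^ d) q hpd
    have hqe : q % 2 = 0 := Nat.even_iff.1 hqeven
    obtain ⟨t, ht⟩ : 2 ∣ ∑ i ∈ Finset.range q, (p ^ d) ^ i := by omega
    refine ⟨t, ?_⟩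
    have : p ^ k - 1 = (p ^ d - 1) * (2 * t) := by
      rw [← ht, hsum, hkq, pow_mul]
    rw [this, show (p ^ d - 1) * (2 * t) = (p ^ d - 1) * t * 2 by ring,
      Nat.mul_div_cancel _ (by norm_num)]
  · -- non-divisibility
    intro ⟨c, hc⟩
    have hsum := geom_sum_nat (p ^ d) r hpd1
    have hmod := geom_sum_mod_two (p ^ d) r hpd
    have hre : r % 2 = 1 := Nat.odd_iff.1 hrodd
    have hpm : p ^ m - 1 = (p ^ d - 1) * ∑ i ∈ Finset.range r, (p ^ d) ^ i := by
      rw [hsum, hmr, pow_mul]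
    have hpmodd : Odd (p ^ m) := hpo.pow
    have h2pm : 2 ∣ p ^ m - 1 := by
      rw [Nat.odd_iff] at hpmodd
      have : 1 ≤ p ^ m := Nat.one_le_pow _ _ hp1
      omega
    have : p ^ m - 1 = (p ^ d - 1) * c * 2 := by
      obtain ⟨e, he⟩ := h2pm
      rw [he]
      rw [he] at hc
      omega
    rw [hpm] at this
    have hsq : (∑ i ∈ Finset.range r, (p ^ d) ^ i) = c * 2 := by
      have := Nat.eq_of_mul_eq_mul_left hpdpos (by linarith [this] : (p ^ d - 1) * (∑ i ∈ Finset.range r, (p ^ d) ^ i) = (p ^ d - 1) * (c * 2))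
      exact this
    omega
end

section
/- Let p be an odd prime, m, k positive integers with v₂(k) < v₂(m) and p^k ≡ 3 (mod 4), π a primitive element of F_{p^m}, and define S(α,β) = Σ_{x∈F_{p^m}} (ζ_p^{Tr(α x^{p^k+1} + β x²)} + ζ_p^{Tr(α π^{(p^k+1)/2} x^{p^k+1} − β π x²)}). Then Σ_{α,β ∈ F_{p^m}} S(α,β)² = 4p^{2m}. -/
private lemma sum_comm4 {ι M : Type*} [Fintype ι] [AddCommMonoid M]
    (G : ι → ι → ι → ι → M) :
    (∑ a : ι, ∑ b : ι, ∑ x : ι, ∑ y : ι, G a b x y)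
      = ∑ x : ι, ∑ y : ι, ∑ a : ι, ∑ b : ι, G a b x y :=
  calc (∑ a : ι, ∑ b : ι, ∑ x : ι, ∑ y : ι, G a b x y)
      = ∑ a : ι, ∑ x : ι, ∑ b : ι, ∑ y : ι, G a b x y :=
        Finset.sum_congr rfl fun _ _ => Finset.sum_comm
    _ = ∑ x : ι, ∑ a : ι, ∑ b : ι, ∑ y : ι, G a b x y := Finset.sum_comm
    _ = ∑ x : ι, ∑ a : ι, ∑ y : ι, ∑ b : ι, G a b x y :=
        Finset.sum_congr rfl fun _ _ => Finset.sum_congr rfl fun _ _ => Finset.sum_comm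
    _ = ∑ x : ι, ∑ y : ι, ∑ a : ι, ∑ b : ι, G a b x y :=
        Finset.sum_congr rfl fun _ _ => Finset.sum_comm

theorem stmt_15 (p m k : ℕ) (hp : p.Prime) [Fact p.Prime] (hpo : Odd p)
    (hm : 0 < m) (hk : 0 < k)
    (hv : padicValNat 2 k < padicValNat 2 m) (hmod : p ^ k % 4 = 3)
    (F : Type*) [Field F] [Fintype F] [Algebra (ZMod p) F]
    (hF : Fintype.card F = p ^ m)
    (π : Fˣ) (hπ : ∀ x : Fˣ, x ∈ Subgroup.zpowers π) :
    (∑ α : F, ∑ β : F,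
        (∑ x : F,
          (Complex.exp (2 * Real.pi * Complex.I *
              ((Algebra.trace (ZMod p) F (α * x ^ (p ^ k + 1) + β * x ^ 2)).val : ℂ) / p)
            + Complex.exp (2 * Real.pi * Complex.I *
              ((Algebra.trace (ZMod p) F
                (α * (π : F) ^ ((p ^ k + 1) / 2) * x ^ (p ^ k + 1)
                  - β * (π : F) * x ^ 2)).val : ℂ) / p))) ^ 2) =
      4 * (p : ℂ) ^ (2 * m) := by
  classical
  haveI : CharP F p := charP_of_injective_algebraMap (algebraMap (ZMod p) F).injective p
  have hp2 : p ≠ 2 := by rintro rfl; simp [Nat.odd_iff] at hpo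
  have hp3 : 3 ≤ p := by have := hp.two_le; omega
  -- the additive character
  set ψ : AddChar F ℂ :=
    (ZMod.stdAddChar).compAddMonoidHom (Algebra.trace (ZMod p) F).toAddMonoidHom with hψdef
  have hval : ∀ z : F, Complex.exp (2 * Real.pi * Complex.I *
      ((Algebra.trace (ZMod p) F z).val : ℂ) / p) = ψ z := by
    intro z
    rw [show ψ z = ZMod.stdAddChar (Algebra.trace (ZMod p) F z) from rfl,
      ZMod.stdAddChar_apply, ZMod.toCircle_apply]
  have hψprim : ψ.IsPrimitive := by
    apply AddChar.IsPrimitive.of_ne_one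
    obtain ⟨z, hz⟩ := Algebra.trace_surjective (ZMod p) F 1
    intro h
    have h1 : ψ z = 1 := by rw [h]; rfl
    have h2 : ZMod.stdAddChar (Algebra.trace (ZMod p) F z) = ZMod.stdAddChar (0 : ZMod p) := by
      rw [AddChar.map_zero_eq_one]; exact h1
    have h3 := ZMod.injective_stdAddChar h2
    rw [hz] at h3
    exact one_ne_zero h3
  have hmul : ∀ u v : F, ψ u * ψ v = ψ (u + v) := fun u v => (ψ.map_add_eq_mul u v).symm
  -- abbreviations
  set E : ℕ := p ^ k + 1 with hEdef
  set c : F := (π : F) ^ (E / 2) with hcdef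
  set w : F := (π : F) with hwdef
  have hE4 : 4 ∣ E := Nat.dvd_of_mod_eq_zero (by omega)
  have hEpos : E ≠ 0 := by omega
  have hw0 : w ≠ 0 := Units.ne_zero π
  have hc0 : c ≠ 0 := pow_ne_zero _ hw0
  have h2F : (2 : F) ≠ 0 := by
    intro h
    have hdvd := (CharP.cast_eq_zero_iff F p 2).mp (by exact_mod_cast h)
    have := Nat.le_of_dvd (by norm_num) hdvd
    omega
  -- π is a nonsquare
  have hns : ∀ a : F, a ^ 2 ≠ w := by
    intro a ha
    have ha0 : a ≠ 0 := by rintro rfl; rw [← ha] at hw0; simp at hw0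
    have hord : orderOf π = Nat.card Fˣ := orderOf_eq_card_of_forall_mem_zpowers hπ
    have hcardu : Nat.card Fˣ = p ^ m - 1 := by
      rw [Nat.card_eq_fintype_card, Fintype.card_units, hF]
    have h3 : 3 ≤ p ^ m := le_trans hp3 (Nat.le_self_pow hm.ne' p)
    have heven : 2 ∣ Nat.card Fˣ := by
      obtain ⟨t, ht⟩ := hpo.pow (n := m)
      rw [hcardu]
      omega
    obtain ⟨d, hd⟩ := heven
    have hau : (Units.mk0 a ha0) ^ 2 = π := Units.ext (by simpa using ha)
    have h1 : π ^ d = 1 := by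
      rw [← hau, ← pow_mul, ← hd]
      exact pow_card_eq_one'
    have hdvd : Nat.card Fˣ ∣ d := hord ▸ orderOf_dvd_of_pow_eq_one h1
    have hdpos : 0 < d := by
      rcases Nat.eq_zero_or_pos d with h | h
      · exfalso; omega
      · exact h
    have := Nat.le_of_dvd hdpos hdvd
    omega
  -- solution-counting lemmas
  have NT2 : ∀ x y : F, x ^ 2 - w * y ^ 2 = 0 → x = 0 ∧ y = 0 := by
    intro x y h
    by_cases hy : y = 0
    · subst hy
      refine ⟨?_, rfl⟩
      have hx : x ^ 2 = 0 := by linear_combination h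
      exact (pow_eq_zero_iff two_ne_zero).mp hx
    · exfalso
      apply hns (x * y⁻¹)
      field_simp
      linear_combination h
  have NT1 : ∀ x y : F, x ^ E + y ^ E = 0 → x ^ 2 + y ^ 2 = 0 → x = 0 ∧ y = 0 := by
    intro x y h1 h2
    by_cases hy : y = 0
    · subst hy
      refine ⟨?_, rfl⟩
      have hx : x ^ 2 = 0 := by linear_combination h2
      exact (pow_eq_zero_iff two_ne_zero).mp hx
    · exfalso
      have hu : (x * y⁻¹) ^ 2 = -1 := by
        field_simp
        linear_combination h2
      have h4 : (x * y⁻¹) ^ 4 = 1 := by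
        rw [show (4 : ℕ) = 2 * 2 from rfl, pow_mul, hu]; norm_num
      obtain ⟨d, hd⟩ := hE4
      have hEone : (x * y⁻¹) ^ E = 1 := by rw [hd, pow_mul, h4, one_pow]
      have hxE : x ^ E = y ^ E := by
        have hx : x = (x * y⁻¹) * y := by field_simp
        rw [hx, mul_pow, hEone, one_mul]
      rw [hxE] at h1
      have h2y : (2 : F) * y ^ E = 0 := by linear_combination h1
      have hy0 : y ^ E = 0 := by
        rcases mul_eq_zero.mp h2y with h | h
        · exact absurd h h2F
        · exact h
      exact hy ((pow_eq_zero_iff hEpos).mp hy0)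
  -- orthogonality
  set N : ℂ := (Fintype.card F : ℂ) with hNdef
  have key : ∀ s t : F, (∑ α : F, ∑ β : F, ψ (α * s) * ψ (β * t))
      = (if s = 0 then N else 0) * (if t = 0 then N else 0) := by
    intro s t
    rw [← Finset.sum_mul_sum]
    rw [AddChar.sum_mulShift _ hψprim, AddChar.sum_mulShift _ hψprim]
    split_ifs <;> simp [hNdef]
  have keyzero : ∀ s t : F, ¬(s = 0 ∧ t = 0) →
      (if s = 0 then N else 0) * (if t = 0 then N else 0) = 0 := by
    intro s t h
    by_cases hs : s = 0
    · by_cases ht : t = 0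
      · exact absurd ⟨hs, ht⟩ h
      · simp [ht]
    · simp [hs]
  -- the inner double sum over α, β
  have inner : ∀ x y : F,
      (∑ α : F, ∑ β : F,
        (ψ (α * x ^ E + β * x ^ 2) + ψ (α * c * x ^ E - β * w * x ^ 2)) *
        (ψ (α * y ^ E + β * y ^ 2) + ψ (α * c * y ^ E - β * w * y ^ 2)))
      = if x = 0 ∧ y = 0 then 4 * N ^ 2 else 0 := by
    intro x y
    have expand : ∀ α β : F,
        (ψ (α * x ^ E + β * x ^ 2) + ψ (α * c * x ^ E - β * w * x ^ 2)) *
        (ψ (α * y ^ E + β * y ^ 2) + ψ (α * c * y ^ E - β * w * y ^ 2))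
        = ψ (α * (x ^ E + y ^ E)) * ψ (β * (x ^ 2 + y ^ 2))
        + ψ (α * (x ^ E + c * y ^ E)) * ψ (β * (x ^ 2 - w * y ^ 2))
        + ψ (α * (c * x ^ E + y ^ E)) * ψ (β * (y ^ 2 - w * x ^ 2))
        + ψ (α * (c * (x ^ E + y ^ E))) * ψ (β * (-w * (x ^ 2 + y ^ 2))) := by
      intro α β
      rw [add_mul, mul_add, mul_add]
      simp only [hmul]
      have e1 : α * x ^ E + β * x ^ 2 + (α * y ^ E + β * y ^ 2)
          = α * (x ^ E + y ^ E) + β * (x ^ 2 + y ^ 2) := by ring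
      have e2 : α * x ^ E + β * x ^ 2 + (α * c * y ^ E - β * w * y ^ 2)
          = α * (x ^ E + c * y ^ E) + β * (x ^ 2 - w * y ^ 2) := by ring
      have e3 : α * c * x ^ E - β * w * x ^ 2 + (α * y ^ E + β * y ^ 2)
          = α * (c * x ^ E + y ^ E) + β * (y ^ 2 - w * x ^ 2) := by ring
      have e4 : α * c * x ^ E - β * w * x ^ 2 + (α * c * y ^ E - β * w * y ^ 2)
          = α * (c * (x ^ E + y ^ E)) + β * (-w * (x ^ 2 + y ^ 2)) := by ring
      rw [e1, e2, e3, e4]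
      ring
    calc (∑ α : F, ∑ β : F,
        (ψ (α * x ^ E + β * x ^ 2) + ψ (α * c * x ^ E - β * w * x ^ 2)) *
        (ψ (α * y ^ E + β * y ^ 2) + ψ (α * c * y ^ E - β * w * y ^ 2)))
        = ∑ α : F, ∑ β : F,
          (ψ (α * (x ^ E + y ^ E)) * ψ (β * (x ^ 2 + y ^ 2))
          + ψ (α * (x ^ E + c * y ^ E)) * ψ (β * (x ^ 2 - w * y ^ 2))
          + ψ (α * (c * x ^ E + y ^ E)) * ψ (β * (y ^ 2 - w * x ^ 2))
          + ψ (α * (c * (x ^ E + y ^ E))) * ψ (β * (-w * (x ^ 2 + y ^ 2)))) :=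
        Finset.sum_congr rfl fun α _ => Finset.sum_congr rfl fun β _ => expand α β
      _ = (∑ α : F, ∑ β : F, ψ (α * (x ^ E + y ^ E)) * ψ (β * (x ^ 2 + y ^ 2)))
          + (∑ α : F, ∑ β : F, ψ (α * (x ^ E + c * y ^ E)) * ψ (β * (x ^ 2 - w * y ^ 2)))
          + (∑ α : F, ∑ β : F, ψ (α * (c * x ^ E + y ^ E)) * ψ (β * (y ^ 2 - w * x ^ 2)))
          + (∑ α : F, ∑ β : F, ψ (α * (c * (x ^ E + y ^ E))) * ψ (β * (-w * (x ^ 2 + y ^ 2)))) := by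
        simp only [Finset.sum_add_distrib]
      _ = if x = 0 ∧ y = 0 then 4 * N ^ 2 else 0 := by
        rw [key, key, key, key]
        by_cases hxy : x = 0 ∧ y = 0
        · obtain ⟨rfl, rfl⟩ := hxy
          simp only [zero_pow hEpos, zero_pow (two_ne_zero (α := ℕ))]
          norm_num
          ring
        · rw [if_neg hxy]
          rw [keyzero, keyzero, keyzero, keyzero]
          · ring
          · rintro ⟨h1, h2⟩
            rcases mul_eq_zero.mp h1 with h | h
            · exact hc0 h
            rcases mul_eq_zero.mp h2 with h' | h'
            · exact hw0 (neg_eq_zero.mp h')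
            · exact hxy (NT1 x y h h')
          · rintro ⟨h1, h2⟩
            obtain ⟨hy0, hx0⟩ := NT2 y x h2
            exact hxy ⟨hx0, hy0⟩
          · rintro ⟨h1, h2⟩
            exact hxy (NT2 x y h2)
          · rintro ⟨h1, h2⟩
            exact hxy (NT1 x y h1 h2)
  -- main computation
  calc (∑ α : F, ∑ β : F,
        (∑ x : F,
          (Complex.exp (2 * Real.pi * Complex.I *
              ((Algebra.trace (ZMod p) F (α * x ^ E + β * x ^ 2)).val : ℂ) / p)
            + Complex.exp (2 * Real.pi * Complex.I *
              ((Algebra.trace (ZMod p) F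
                (α * c * x ^ E - β * w * x ^ 2)).val : ℂ) / p))) ^ 2)
      = ∑ α : F, ∑ β : F,
        (∑ x : F, (ψ (α * x ^ E + β * x ^ 2) + ψ (α * c * x ^ E - β * w * x ^ 2))) ^ 2 := by
        simp only [hval]
    _ = ∑ α : F, ∑ β : F, ∑ x : F, ∑ y : F,
        (ψ (α * x ^ E + β * x ^ 2) + ψ (α * c * x ^ E - β * w * x ^ 2)) *
        (ψ (α * y ^ E + β * y ^ 2) + ψ (α * c * y ^ E - β * w * y ^ 2)) := by
        simp only [sq, Finset.sum_mul_sum]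
    _ = ∑ x : F, ∑ y : F, ∑ α : F, ∑ β : F,
        (ψ (α * x ^ E + β * x ^ 2) + ψ (α * c * x ^ E - β * w * x ^ 2)) *
        (ψ (α * y ^ E + β * y ^ 2) + ψ (α * c * y ^ E - β * w * y ^ 2)) :=
        sum_comm4 _
    _ = ∑ x : F, ∑ y : F, (if x = 0 ∧ y = 0 then 4 * N ^ 2 else 0) :=
        Finset.sum_congr rfl fun x _ => Finset.sum_congr rfl fun y _ => inner x y
    _ = 4 * N ^ 2 := by
        have hrow : ∀ x : F, (∑ y : F, if x = 0 ∧ y = 0 then 4 * N ^ 2 else 0)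
            = if x = 0 then 4 * N ^ 2 else 0 := by
          intro x
          by_cases hx : x = 0
          · simp [hx, Finset.sum_ite_eq' Finset.univ (0 : F) (fun _ => 4 * N ^ 2)]
          · simp [hx]
        simp_rw [hrow]
        simp [Finset.sum_ite_eq' Finset.univ (0 : F) (fun _ => 4 * N ^ 2)]
    _ = 4 * (p : ℂ) ^ (2 * m) := by
        rw [hNdef, hF]
        push_cast
        rw [← pow_mul, Nat.mul_comm]
end

section
/- Let p be an odd prime, m, k positive integers, d = gcd(m,k), and α, β ∈ F_{p^m} with α ≠ 0. Define φ_{α,β}(x) = α^{p^k} x^{p^{2k}} + 2β^{p^k} x^{p^k} + αx. If 1 ≤ v₂(m) < v₂(k) or v₂(k) < v₂(m), and π is a primitive element of F_{p^m}, then φ_{α,β} and φ_{π^{(p^k+1)/2}α, −πβ} cannot both have a nonzero root in F_{p^m}. -/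
theorem stmt_17 (p m k : ℕ) (hp : p.Prime) (hpo : Odd p) (hm : 0 < m) (hk : 0 < k)
    (hv : (1 ≤ padicValNat 2 m ∧ padicValNat 2 m < padicValNat 2 k) ∨
          padicValNat 2 k < padicValNat 2 m)
    (F : Type*) [Field F] [Fintype F] (hF : Fintype.card F = p ^ m)
    (π : Fˣ) (hπ : ∀ x : Fˣ, x ∈ Subgroup.zpowers π)
    (α β : F) (hα : α ≠ 0) :
    ¬ ((∃ x : F, x ≠ 0 ∧
          α ^ (p ^ k) * x ^ (p ^ (2 * k)) + 2 * β ^ (p ^ k) * x ^ (p ^ k) + α * x = 0) ∧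
       (∃ x : F, x ≠ 0 ∧
          ((π : F) ^ ((p ^ k + 1) / 2) * α) ^ (p ^ k) * x ^ (p ^ (2 * k))
            + 2 * (-(π : F) * β) ^ (p ^ k) * x ^ (p ^ k)
            + (π : F) ^ ((p ^ k + 1) / 2) * α * x = 0)) := by
  classical
  rintro ⟨⟨x₁, hx₁, h1⟩, ⟨x₂, hx₂, h2⟩⟩
  haveI : Fact p.Prime := ⟨hp⟩
  -- characteristic p
  haveI hch : CharP F p := by
    obtain ⟨n', hcp, hcard⟩ := FiniteField.card F (ringChar F)
    have hpc : p = ringChar F := by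
      have hdd : p ∣ (ringChar F) ^ (n' : ℕ) := by
        rw [← hcard, hF]; exact dvd_pow_self p hm.ne'
      exact (Nat.prime_dvd_prime_iff_eq hp hcp).mp (hp.dvd_of_dvd_pow hdd)
    rw [hpc]; infer_instance
  obtain ⟨e, he⟩ : Odd (p ^ k) := hpo.pow
  obtain ⟨c, hc⟩ : Odd (p ^ m) := hpo.pow
  have he' : p ^ k = 2 * e + 1 := by omega
  have hc' : p ^ m = 2 * c + 1 := by omega
  have hπ0 : (π : F) ≠ 0 := Units.ne_zero π
  -- Part B : produce v with v ^ (2e) = -π ^ e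
  obtain ⟨v, hv0, hveq⟩ : ∃ v : F, v ≠ 0 ∧ v ^ (2 * e) = -(π : F) ^ e := by
    have hoddq : Odd (p ^ k) := ⟨e, by omega⟩
    have hneg : (-(π : F) * β) ^ (p ^ k) = -(((π : F) * β) ^ (p ^ k)) := by
      rw [neg_mul, hoddq.neg_pow]
    have hhalf : (p ^ k + 1) / 2 = e + 1 := by omega
    have h2k : p ^ (2 * k) = p ^ k * p ^ k := by rw [two_mul, pow_add]
    rw [hneg, hhalf, h2k] at h2
    rw [h2k] at h1
    set D : F := x₁ ^ (2 * e) + (π : F) ^ e * x₂ ^ (2 * e) with hDdef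
    have hDq : D ^ (p ^ k) = (x₁ ^ (2 * e)) ^ (p ^ k) + ((π : F) ^ e * x₂ ^ (2 * e)) ^ (p ^ k) :=
      add_pow_char_pow _ _ p k
    have key : (α ^ (2 * e) * D ^ (p ^ k) * x₁ ^ (2 * e) * ((π : F) ^ e * x₂ ^ (2 * e)) + D)
        * ((π : F) ^ (e + 1) * α * x₁ * x₂) = 0 := by
      rw [hDq, hDdef, he']
      rw [he'] at h1 h2
      linear_combination ((π : F) ^ (2 * e + 1) * x₂ ^ (2 * e + 1)) * h1 + x₁ ^ (2 * e + 1) * h2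
    have hfac : (π : F) ^ (e + 1) * α * x₁ * x₂ ≠ 0 :=
      mul_ne_zero (mul_ne_zero (mul_ne_zero (pow_ne_zero _ hπ0) hα) hx₁) hx₂
    have hG : α ^ (2 * e) * D ^ (p ^ k) * x₁ ^ (2 * e) * ((π : F) ^ e * x₂ ^ (2 * e)) = -D :=
      eq_neg_of_add_eq_zero_left ((mul_eq_zero.mp key).resolve_right hfac)
    by_cases hD0 : D = 0
    · refine ⟨x₁ * x₂⁻¹, mul_ne_zero hx₁ (inv_ne_zero hx₂), ?_⟩
      have hx1e : x₁ ^ (2 * e) = -((π : F) ^ e * x₂ ^ (2 * e)) := by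
        rw [eq_neg_iff_add_eq_zero]; exact hD0
      have hxp : (x₂ ^ (2 * e)) ≠ 0 := pow_ne_zero _ hx₂
      rw [mul_pow, inv_pow, hx1e]
      field_simp
    · have hz : α * x₁ * x₂ * D ≠ 0 := mul_ne_zero (mul_ne_zero (mul_ne_zero hα hx₁) hx₂) hD0
      refine ⟨(α * x₁ * x₂ * D)⁻¹, inv_ne_zero hz, ?_⟩
      have hexp : (α * x₁ * x₂ * D) ^ (2 * e)
          = α ^ (2 * e) * x₁ ^ (2 * e) * x₂ ^ (2 * e) * D ^ (2 * e) := by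
        rw [mul_pow, mul_pow, mul_pow]
      have hprod : (α * x₁ * x₂ * D) ^ (2 * e) * (π : F) ^ e = -1 := by
        rw [hexp]
        have hG2 : (α ^ (2 * e) * D ^ (2 * e) * x₁ ^ (2 * e) * ((π : F) ^ e * x₂ ^ (2 * e))) * D
            = (-1) * D := by
          rw [he'] at hG
          linear_combination hG
        have h4 := mul_right_cancel₀ hD0 hG2
        linear_combination h4
      have hπe : (π : F) ^ e ≠ 0 := pow_ne_zero _ hπ0
      have h5 : (α * x₁ * x₂ * D) ^ (2 * e) = -((π : F) ^ e)⁻¹ := by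
        apply mul_right_cancel₀ hπe
        rw [hprod, neg_mul, inv_mul_cancel₀ hπe]
      rw [inv_pow, h5, inv_neg, inv_inv]
  -- Part D : order / discrete log
  have horder : orderOf π = 2 * c := by
    rw [orderOf_eq_card_of_forall_mem_zpowers hπ, Nat.card_units, Nat.card_eq_fintype_card, hF, hc']
    omega
  have hp3 : 3 ≤ p := by
    rcases hpo with ⟨t, ht⟩
    have := hp.two_le
    omega
  have hc1 : 1 ≤ c := by
    have : 3 ≤ p ^ m := le_trans hp3 (Nat.le_self_pow hm.ne' p)
    omega
  have hu : π ^ c = -1 := by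
    have hsq : π ^ c * π ^ c = 1 := by
      rw [← pow_add]
      have h7 : c + c = 2 * c := by ring
      rw [h7, ← horder, pow_orderOf_eq_one]
    have hne : π ^ c ≠ 1 := by
      intro h
      have hd := orderOf_dvd_of_pow_eq_one h
      rw [horder] at hd
      have := Nat.le_of_dvd (by omega) hd
      omega
    have hval : ((π ^ c : Fˣ) : F) * ((π ^ c : Fˣ) : F) = 1 := by
      rw [← Units.val_mul, hsq, Units.val_one]
    have hfac2 : (((π ^ c : Fˣ) : F) - 1) * (((π ^ c : Fˣ) : F) + 1) = 0 := by
      linear_combination hval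
    rcases mul_eq_zero.mp hfac2 with h | h
    · exfalso
      apply hne
      apply Units.ext
      rw [Units.val_one]
      linear_combination h
    · apply Units.ext
      have : ((π ^ c : Fˣ) : F) = -1 := by linear_combination h
      rw [this]
      simp
  set vu : Fˣ := Units.mk0 v hv0 with hvu
  obtain ⟨j, hj⟩ := Subgroup.mem_zpowers_iff.mp (hπ vu)
  have hun : vu ^ (2 * e) = π ^ (c + e) := by
    apply Units.ext
    rw [Units.val_pow_eq_pow_val, Units.val_pow_eq_pow_val, hvu, Units.val_mk0, hveq, pow_add]
    have : ((π ^ c : Fˣ) : F) = -1 := by rw [hu]; simp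
    rw [Units.val_pow_eq_pow_val] at this
    rw [this]
    ring
  have hz1 : π ^ (j * ((2 * e : ℕ) : ℤ) - (((c + e : ℕ) : ℤ))) = 1 := by
    rw [zpow_sub, zpow_mul, zpow_natCast, zpow_natCast, hj, hun]
    simp
  have hdvd0 : ((2 * c : ℕ) : ℤ) ∣ j * ((2 * e : ℕ) : ℤ) - ((c + e : ℕ) : ℤ) := by
    have := orderOf_dvd_iff_zpow_eq_one.mpr hz1
    rwa [horder] at this
  have hdvd : ((2 * c : ℕ) : ℤ) ∣ j * (2 * (e : ℤ)) - ((c : ℤ) + e) := by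
    convert hdvd0 using 2 <;> push_cast <;> ring
  -- Part C : number theory contradiction
  have hvne : padicValNat 2 m ≠ padicValNat 2 k := by omega
  exact absurd hdvd (by
    intro hdvd
    have h2p : Nat.Prime 2 := Nat.prime_two
    set d := m.gcd k with hd
    have hddm : d ∣ m := Nat.gcd_dvd_left m k
    have hddk : d ∣ k := Nat.gcd_dvd_right m k
    have hd0 : d ≠ 0 := Nat.gcd_ne_zero_left hm.ne'
    set e₁ := m / d with he₁def
    set e₂ := k / d with he₂def
    have he₁0 : e₁ ≠ 0 := (Nat.div_ne_zero_iff_of_dvd hddm).mpr ⟨hm.ne', hd0⟩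
    have he₂0 : e₂ ≠ 0 := (Nat.div_ne_zero_iff_of_dvd hddk).mpr ⟨hk.ne', hd0⟩
    have hfm : m.factorization 2 = padicValNat 2 m := Nat.factorization_def m h2p
    have hfk : k.factorization 2 = padicValNat 2 k := Nat.factorization_def k h2p
    have hfd : d.factorization 2 = min (m.factorization 2) (k.factorization 2) := by
      rw [hd, Nat.factorization_gcd hm.ne' hk.ne']; exact Finsupp.inf_apply _ _ _
    have hfe₁ : e₁.factorization 2 = m.factorization 2 - d.factorization 2 := by
      rw [he₁def, Nat.factorization_div hddm]; exact Finsupp.tsub_apply _ _ _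
    have hfe₂ : e₂.factorization 2 = k.factorization 2 - d.factorization 2 := by
      rw [he₂def, Nat.factorization_div hddk]; exact Finsupp.tsub_apply _ _ _
    have hodd_of : ∀ n : ℕ, n ≠ 0 → n.factorization 2 = 0 → Odd n := by
      intro n hn h0
      rcases (Nat.factorization_eq_zero_iff n 2).mp h0 with h | h | h
      · exact absurd h2p h
      · exact Nat.odd_iff.mpr (Nat.two_dvd_ne_zero.mp h)
      · exact absurd h hn
    have heven_of : ∀ n : ℕ, n ≠ 0 → 1 ≤ n.factorization 2 → Even n := by
      intro n hn h1
      obtain ⟨t, ht⟩ := (Nat.Prime.dvd_iff_one_le_factorization h2p hn).mpr h1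
      exact ⟨t, by omega⟩
    have hparity : Odd (e₁ + e₂) := by
      rcases Nat.lt_or_ge (padicValNat 2 m) (padicValNat 2 k) with hlt | hge
      · have h1 : e₁.factorization 2 = 0 := by omega
        have h2 : 1 ≤ e₂.factorization 2 := by omega
        exact (hodd_of e₁ he₁0 h1).add_even (heven_of e₂ he₂0 h2)
      · have hlt : padicValNat 2 k < padicValNat 2 m := lt_of_le_of_ne hge (Ne.symm hvne)
        have h1 : e₂.factorization 2 = 0 := by omega
        have h2 : 1 ≤ e₁.factorization 2 := by omega
        have := (hodd_of e₂ he₂0 h1).add_even (heven_of e₁ he₁0 h2)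
        rwa [Nat.add_comm] at this
    set a : ℤ := (p : ℤ) ^ d with ha
    set M : ℤ := ∑ i ∈ Finset.range e₁, a ^ i with hMdef
    set K : ℤ := ∑ i ∈ Finset.range e₂, a ^ i with hKdef
    have hae : a ^ e₁ = (p : ℤ) ^ m := by
      rw [ha, ← pow_mul]; congr 1; exact Nat.mul_div_cancel' hddm
    have hak : a ^ e₂ = (p : ℤ) ^ k := by
      rw [ha, ← pow_mul]; congr 1; exact Nat.mul_div_cancel' hddk
    have hM : M * (a - 1) = 2 * (c : ℤ) := by
      rw [hMdef, geom_sum_mul, hae]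
      have : ((p : ℤ)) ^ m = 2 * (c : ℤ) + 1 := by exact_mod_cast congrArg (Nat.cast : ℕ → ℤ) hc'
      rw [this]; ring
    have hK : K * (a - 1) = 2 * (e : ℤ) := by
      rw [hKdef, geom_sum_mul, hak]
      have : ((p : ℤ)) ^ k = 2 * (e : ℤ) + 1 := by exact_mod_cast congrArg (Nat.cast : ℕ → ℤ) he'
      rw [this]; ring
    obtain ⟨E, hE⟩ := hpo.pow (n := d)
    have hpd3 : 3 ≤ p ^ d := le_trans hp3 (Nat.le_self_pow hd0 p)
    have hE1 : 1 ≤ E := by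
      have h' : 3 ≤ 2 * E + 1 := hE ▸ hpd3
      omega
    have haE : a - 1 = 2 * (E : ℤ) := by
      rw [ha]
      have : ((p : ℤ)) ^ d = 2 * (E : ℤ) + 1 := by
        exact_mod_cast congrArg (Nat.cast : ℕ → ℤ) hE
      rw [this]; ring
    have hgc : (a - 1) ∣ 2 * (c : ℤ) := Dvd.intro_left M hM
    have hge' : (a - 1) ∣ 2 * (e : ℤ) := Dvd.intro_left K hK
    have hgce : (a - 1) ∣ ((c : ℤ) + e) := by
      obtain ⟨l, hl⟩ := hdvd
      have : ((c : ℤ) + e) = j * (2 * (e : ℤ)) - (2 * (c : ℤ)) * l := by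
        push_cast at hl ⊢; linarith
      rw [this]
      exact dvd_sub (Dvd.dvd.mul_left hge' j) (Dvd.dvd.mul_right hgc l)
    obtain ⟨w, hw⟩ := hgce
    have hMK : M + K = 2 * w := by
      have h6 : 2 * ((c : ℤ) + e) = (a - 1) * (M + K) := by linarith [hM, hK]
      have h7 : (a - 1) * (M + K) = (a - 1) * (2 * w) := by rw [← h6, hw]; ring
      have hane : (a - 1) ≠ 0 := by rw [haE]; positivity
      exact mul_left_cancel₀ hane h7
    have hcast : ∀ N : ℕ, ((∑ i ∈ Finset.range N, a ^ i : ℤ) : ZMod 2) = (N : ZMod 2) := by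
      intro N
      push_cast
      have hpa : ((a : ZMod 2)) = 1 := by
        obtain ⟨c', hc''⟩ := hpo
        rw [ha]
        push_cast [hc'']
        ring_nf
        simp [show ((2 : ZMod 2)) = 0 from rfl]
      calc (∑ i ∈ Finset.range N, (a : ZMod 2) ^ i) = ∑ i ∈ Finset.range N, 1 := by
            refine Finset.sum_congr rfl fun i _ => by rw [hpa, one_pow]
        _ = (N : ZMod 2) := by simp
    have hMc : ((M : ZMod 2)) = (e₁ : ZMod 2) := by rw [hMdef]; exact hcast e₁
    have hKc : ((K : ZMod 2)) = (e₂ : ZMod 2) := by rw [hKdef]; exact hcast e₂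
    have hfin : ((e₁ : ZMod 2)) + (e₂ : ZMod 2) = 0 := by
      have h6 : ((M + K : ℤ) : ZMod 2) = ((2 * w : ℤ) : ZMod 2) := by rw [hMK]
      push_cast at h6
      rw [hMc, hKc] at h6
      rw [h6]
      simp [show ((2 : ZMod 2)) = 0 from rfl]
    obtain ⟨t, ht⟩ := hparity
    have hfin2 : ((e₁ : ZMod 2)) + (e₂ : ZMod 2) = 1 := by
      have : ((e₁ + e₂ : ℕ) : ZMod 2) = ((2 * t + 1 : ℕ) : ZMod 2) := by rw [ht]
      push_cast at this
      rw [this]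
      simp [show ((2 : ZMod 2)) = 0 from rfl]
    rw [hfin] at hfin2
    exact absurd hfin2 (by decide))
end

section
/- Let p be an odd prime, m, k positive integers with k odd and m even, and d = gcd(m,k). Then π^{(p^m−1)/(p−1)} is a nonsquare element of F_{p^d}, where π is a primitive element of F_{p^m}; i.e., the generator of F_p* is a nonsquare in F_{p^d}. -/
theorem stmt_19 (p m k : ℕ) (hp : p.Prime) (hpo : Odd p) (hm : 0 < m) (hk : 0 < k)
    (hko : Odd k) (hme : Even m)
    (F : Type*) [Field F] [Fintype F] (hF : Fintype.card F = p ^ m)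
    (π : Fˣ) (hπ : ∀ x : Fˣ, x ∈ Subgroup.zpowers π) :
    ¬ ∃ y : F, y ^ (p ^ Nat.gcd m k) = y ∧
        y ^ 2 = (π : F) ^ ((p ^ m - 1) / (p - 1)) := by
  rintro ⟨y, hy1, hy2⟩
  set d := Nat.gcd m k with hd
  have hd1 : 0 < d := Nat.gcd_pos_of_pos_left k hm
  have hdm : d ∣ m := Nat.gcd_dvd_left m k
  have hdo : Odd d := by
    rcases Nat.even_or_odd d with he | ho
    · exact absurd (even_iff_two_dvd.mpr ((even_iff_two_dvd.mp he).trans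
        (Nat.gcd_dvd_right m k)) : Even k) (Nat.not_even_iff_odd.mpr hko)
    · exact ho
  have hp2 : 2 ≤ p := hp.two_le
  have hp3 : 3 ≤ p := by
    rcases hpo with ⟨c, hc⟩; omega
  have hpd1 : 1 ≤ p ^ d := Nat.one_le_pow _ _ (by omega)
  have hpm1 : 1 ≤ p ^ m := Nat.one_le_pow _ _ (by omega)
  set N := (p ^ m - 1) / (p - 1) with hN
  set q := (p ^ m - 1) / (p ^ d - 1) with hq
  set E := (p ^ d - 1) / (p - 1) with hE
  -- divisibilities
  have hDdvd : p ^ d - 1 ∣ p ^ m - 1 := by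
    have := Nat.sub_dvd_pow_sub_pow (p ^ d) 1 (m / d)
    rwa [one_pow, ← pow_mul, Nat.mul_div_cancel' hdm] at this
  have hNdvd : p - 1 ∣ p ^ m - 1 := by
    have := Nat.sub_dvd_pow_sub_pow p 1 m
    rwa [one_pow] at this
  have hEdvd : p - 1 ∣ p ^ d - 1 := by
    have := Nat.sub_dvd_pow_sub_pow p 1 d
    rwa [one_pow] at this
  have hqeq : q * (p ^ d - 1) = p ^ m - 1 := Nat.div_mul_cancel hDdvd
  have hEeq : E * (p - 1) = p ^ d - 1 := Nat.div_mul_cancel hEdvd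
  have hNeq : N * (p - 1) = p ^ m - 1 := Nat.div_mul_cancel hNdvd
  have hNE : N = q * E := by
    have h1 : N * (p - 1) = (q * E) * (p - 1) := by
      rw [hNeq, mul_assoc, hEeq, hqeq]
    exact Nat.eq_of_mul_eq_mul_right (by omega) h1
  -- E is odd
  have hEodd : Odd E := by
    have hS : (∑ i ∈ Finset.range d, p ^ i) * (p - 1) = p ^ d - 1 := by
      have h2 : ((∑ i ∈ Finset.range d, p ^ i : ℕ) : ℤ) * ((p : ℤ) - 1)
          = ((p : ℤ) ^ d - 1) := by push_cast; exact geom_sum_mul (p : ℤ) d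
      have h3 : (((∑ i ∈ Finset.range d, p ^ i) * (p - 1) : ℕ) : ℤ)
          = ((p ^ d - 1 : ℕ) : ℤ) := by
        rw [Nat.cast_mul, Nat.cast_sub hpd1, Nat.cast_sub (by omega : 1 ≤ p)]
        push_cast
        push_cast at h2
        linarith
      exact_mod_cast h3
    have hES : E = ∑ i ∈ Finset.range d, p ^ i := by
      apply Nat.eq_of_mul_eq_mul_right (by omega : 0 < p - 1)
      rw [hEeq, hS]
    rw [hES, Nat.odd_iff, Finset.sum_nat_mod]
    have hc : ∀ i ∈ Finset.range d, p ^ i % 2 = 1 := fun i _ =>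
      Nat.odd_iff.mp (hpo.pow)
    rw [Finset.sum_congr rfl hc, Finset.sum_const, Finset.card_range, smul_eq_mul,
      mul_one]
    exact Nat.odd_iff.mp hdo
  -- order of π
  classical
  have horder : orderOf π = p ^ m - 1 := by
    rw [orderOf_eq_card_of_forall_mem_zpowers hπ, Nat.card_units, Nat.card_eq_fintype_card, hF]
  -- y ≠ 0
  have hyne : y ≠ 0 := by
    intro h
    rw [h] at hy2
    exact pow_ne_zero N π.ne_zero (by simpa using hy2.symm)
  set u := Units.mk0 y hyne with hu
  have huv : (u : F) = y := rfl
  have hu2 : u ^ 2 = π ^ N := by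
    apply Units.ext
    push_cast [huv]
    exact hy2
  have huD : u ^ (p ^ d - 1) = 1 := by
    apply Units.ext
    push_cast [huv]
    have hyy : y ^ (p ^ d - 1) * y = 1 * y := by
      rw [one_mul, ← pow_succ, Nat.sub_add_cancel hpd1]
      exact hy1
    exact mul_right_cancel₀ hyne hyy
  obtain ⟨t, ht⟩ := Subgroup.mem_zpowers_iff.mp (hπ u)
  have h1 : ((p ^ m - 1 : ℕ) : ℤ) ∣ 2 * t - (N : ℤ) := by
    rw [← horder, orderOf_dvd_iff_zpow_eq_one, zpow_sub, zpow_natCast, ← hu2,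
      mul_comm (2 : ℤ) t, zpow_mul, ht]
    group
  have h2 : ((p ^ m - 1 : ℕ) : ℤ) ∣ t * ((p ^ d - 1 : ℕ) : ℤ) := by
    rw [← horder, orderOf_dvd_iff_zpow_eq_one, zpow_mul, ht, zpow_natCast, huD]
  -- integer arithmetic
  have hpm2 : p ≤ p ^ m := Nat.le_self_pow hm.ne' p
  have hpd2 : p ≤ p ^ d := Nat.le_self_pow hd1.ne' p
  have hq0 : 0 < q := by
    rcases Nat.eq_zero_or_pos q with h | h
    · rw [h, zero_mul] at hqeq; omega
    · exact h
  have hM : ((p ^ m - 1 : ℕ) : ℤ) = (q : ℤ) * ((p ^ d - 1 : ℕ) : ℤ) := by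
    rw [← hqeq]; exact Nat.cast_mul q (p ^ d - 1)
  have hD0 : ((p ^ d - 1 : ℕ) : ℤ) ≠ 0 := by
    have : 0 < p ^ d - 1 := by
        omega
    exact_mod_cast this.ne'
  have hqt : (q : ℤ) ∣ t := by
    rw [hM] at h2
    exact (mul_dvd_mul_iff_right hD0).mp h2
  obtain ⟨s, hs⟩ := hqt
  have hNc : (N : ℤ) = (q : ℤ) * (E : ℤ) := by rw [hNE]; exact Nat.cast_mul q E
  have h3 : ((p ^ d - 1 : ℕ) : ℤ) ∣ 2 * s - (E : ℤ) := by
    rw [hM, hs, hNc] at h1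
    have : (q : ℤ) * ((p ^ d - 1 : ℕ) : ℤ) ∣ (q : ℤ) * (2 * s - (E : ℤ)) := by
      convert h1 using 1; ring
    exact (mul_dvd_mul_iff_left (by exact_mod_cast hq0.ne' : (q : ℤ) ≠ 0)).mp this
  have h2D : (2 : ℤ) ∣ ((p ^ d - 1 : ℕ) : ℤ) := by
    have : Even (p ^ d - 1) := Nat.Odd.sub_odd hpo.pow odd_one
    exact_mod_cast this.two_dvd
  have h2E : (2 : ℤ) ∣ 2 * s - (E : ℤ) := h2D.trans h3
  obtain ⟨e, he⟩ := hEodd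
  obtain ⟨c, hc⟩ := h2E
  have : (E : ℤ) = 2 * e + 1 := by exact_mod_cast he
  omega
end
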